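/- arXiv:1510.09011 — 9 statements merged into one kernel-verified Lean document; each statement's English description precedes it below -/
import Mathlib

section
/- For every twice continuously differentiable map X : ℝ³ × ℝ → ℝ³, the Geometric Conservation Law holds pointwise: ∂𝒥/∂τ = Σ over cyclic triples (i,j,k) of ∂/∂ξⁱ [ (a_j × a_k) · ∂X/∂τ ], i.e. the time derivative of the Jacobian equals the ξ-divergence of the mesh-velocity fluxes (a_j × a_k)·X_τ. -/
open Matrix

noncomputable def crossCLM : (Fin 3 → ℝ) →L[ℝ] (Fin 3 → ℝ) →L[ℝ] (Fin 3 → ℝ) :=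
  LinearMap.toContinuousLinearMap
    { toFun := fun x => LinearMap.toContinuousLinearMap (crossProduct x)
      map_add' := fun x y => by ext v; simp [LinearMap.map_add₂]
      map_smul' := fun c x => by ext v; simp }

noncomputable def dotCLM : (Fin 3 → ℝ) →L[ℝ] (Fin 3 → ℝ) →L[ℝ] ℝ :=
  LinearMap.toContinuousLinearMap
    { toFun := fun x => LinearMap.toContinuousLinearMap
        { toFun := fun y => x ⬝ᵥ y
          map_add' := fun y z => by simp [dotProduct_add]
          map_smul' := fun c y => by simp }
      map_add' := fun x y => by ext v; simp [add_dotProduct]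
      map_smul' := fun c x => by ext v; simp [smul_dotProduct] }

@[simp] lemma crossCLM_apply (x y : Fin 3 → ℝ) : crossCLM x y = crossProduct x y := rfl
@[simp] lemma dotCLM_apply (x y : Fin 3 → ℝ) : dotCLM x y = x ⬝ᵥ y := rfl

lemma hasFDerivAt_cross {f g : (Fin 3 → ℝ) × ℝ → (Fin 3 → ℝ)}
    {f' g' : ((Fin 3 → ℝ) × ℝ) →L[ℝ] (Fin 3 → ℝ)} {p : (Fin 3 → ℝ) × ℝ}
    (hf : HasFDerivAt f f' p) (hg : HasFDerivAt g g' p) :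
    HasFDerivAt (fun x => crossProduct (f x) (g x))
      ((crossCLM (f p)).comp g' + (crossCLM.comp f').flip (g p)) p := by
  have hc : HasFDerivAt (fun x => crossCLM (f x)) (crossCLM.comp f') p :=
    (crossCLM.hasFDerivAt).comp p hf
  exact hc.clm_apply hg

lemma hasFDerivAt_dot {f g : (Fin 3 → ℝ) × ℝ → (Fin 3 → ℝ)}
    {f' g' : ((Fin 3 → ℝ) × ℝ) →L[ℝ] (Fin 3 → ℝ)} {p : (Fin 3 → ℝ) × ℝ}
    (hf : HasFDerivAt f f' p) (hg : HasFDerivAt g g' p) :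
    HasFDerivAt (fun x => f x ⬝ᵥ g x)
      ((dotCLM (f p)).comp g' + (dotCLM.comp f').flip (g p)) p := by
  have hc : HasFDerivAt (fun x => dotCLM (f x)) (dotCLM.comp f') p :=
    (dotCLM.hasFDerivAt).comp p hf
  exact hc.clm_apply hg

/-- **The Geometric Conservation Law (GCL).** For any twice continuously
differentiable time-dependent mapping `X(ξ,τ)`, with covariant basis vectors
`a i = ∂X/∂ξ i` and Jacobian `𝒥 = a₁ ⋅ (a₂ × a₃)`, the time derivative of the
Jacobian equals the ξ-divergence of the mesh-velocity fluxes `(a j × a k) ⋅ X_τ`,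
summed over cyclic triples `(i,j,k)`. -/
theorem geometric_conservation_law
    (X : (Fin 3 → ℝ) × ℝ → (Fin 3 → ℝ)) (hX : ContDiff ℝ 2 X)
    (a : Fin 3 → (Fin 3 → ℝ) × ℝ → (Fin 3 → ℝ))
    (ha : ∀ i p, a i p = fderiv ℝ X p (Pi.single i 1, 0))
    (Xτ : (Fin 3 → ℝ) × ℝ → (Fin 3 → ℝ))
    (hXτ : ∀ p, Xτ p = fderiv ℝ X p (0, 1))
    (J : (Fin 3 → ℝ) × ℝ → ℝ)
    (hJ : ∀ p, J p = a 0 p ⬝ᵥ crossProduct (a 1 p) (a 2 p))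
    (p : (Fin 3 → ℝ) × ℝ) :
    fderiv ℝ J p (0, 1)
      = fderiv ℝ (fun x => crossProduct (a 1 x) (a 2 x) ⬝ᵥ Xτ x) p (Pi.single 0 1, 0)
        + fderiv ℝ (fun x => crossProduct (a 2 x) (a 0 x) ⬝ᵥ Xτ x) p (Pi.single 1 1, 0)
        + fderiv ℝ (fun x => crossProduct (a 0 x) (a 1 x) ⬝ᵥ Xτ x) p (Pi.single 2 1, 0) := by
  have hX1 : ContDiff ℝ 1 (fderiv ℝ X) := hX.fderiv_right (by norm_num)
  have hdX : ∀ y, HasFDerivAt X (fderiv ℝ X y) y :=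
    fun y => (hX.differentiable two_ne_zero y).hasFDerivAt
  have hdA : HasFDerivAt (fderiv ℝ X) (fderiv ℝ (fderiv ℝ X) p) p :=
    (hX1.differentiable one_ne_zero p).hasFDerivAt
  set A := fderiv ℝ (fderiv ℝ X) p with hAdef
  have hsym : ∀ v w, A v w = A w v := second_derivative_symmetric hdX hdA
  have haD : ∀ i : Fin 3, HasFDerivAt (a i) (A.flip (Pi.single i 1, 0)) p := by
    intro i
    have h1 : a i = fun x => (fderiv ℝ X x) ((Pi.single i 1, (0:ℝ))) := funext (ha i)
    rw [h1]
    simpa using hdA.clm_apply (hasFDerivAt_const ((Pi.single i 1, (0:ℝ))) p)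
  have hXτD : HasFDerivAt Xτ (A.flip (0, 1)) p := by
    have h1 : Xτ = fun x => (fderiv ℝ X x) ((0:Fin 3 → ℝ), (1:ℝ)) := funext hXτ
    rw [h1]
    simpa using hdA.clm_apply (hasFDerivAt_const (((0:Fin 3 → ℝ),(1:ℝ))) p)
  -- derivative of J
  have hJD := hasFDerivAt_dot (haD 0) (hasFDerivAt_cross (haD 1) (haD 2))
  have hJeq : J = fun x => a 0 x ⬝ᵥ crossProduct (a 1 x) (a 2 x) := funext hJ
  rw [hJeq]
  rw [hJD.fderiv]
  rw [(hasFDerivAt_dot (hasFDerivAt_cross (haD 1) (haD 2)) hXτD).fderiv]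
  rw [(hasFDerivAt_dot (hasFDerivAt_cross (haD 2) (haD 0)) hXτD).fderiv]
  rw [(hasFDerivAt_dot (hasFDerivAt_cross (haD 0) (haD 1)) hXτD).fderiv]
  simp only [ContinuousLinearMap.add_apply, ContinuousLinearMap.coe_comp',
    Function.comp_apply, ContinuousLinearMap.flip_apply, crossCLM_apply, dotCLM_apply]
  rw [hsym (Pi.single 0 1, 0) (0,1), hsym (Pi.single 1 1, 0) (0,1),
      hsym (Pi.single 2 1, 0) (0,1), hsym (Pi.single 1 1, 0) (Pi.single 0 1, 0),
      hsym (Pi.single 2 1, 0) (Pi.single 0 1, 0), hsym (Pi.single 2 1, 0) (Pi.single 1 1, 0)]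
  simp only [cross_apply, dotProduct, Fin.sum_univ_three, Matrix.cons_val_zero,
    Matrix.cons_val_one, Matrix.head_cons, Matrix.cons_val_two, Matrix.tail_cons, Pi.add_apply]
  ring
end

section
/- Suppose u and f are continuously differentiable and satisfy the conservation law ∂u/∂t + div_x f = 0 at every point of ℝ³ × ℝ, and let X : ℝ³ × ℝ → ℝ³ be twice continuously differentiable. Define the pullbacks U(ξ,τ) = u(X(ξ,τ),τ) and F(ξ,τ) = f(X(ξ,τ),τ). Then the mapped equation holds pointwise on ℝ³ × ℝ: ∂(𝒥U)/∂τ + Σ over cyclic triples (i,j,k) of ∂/∂ξⁱ [ (a_j × a_k) · ( F − U·∂X/∂τ ) ] = 0; that is, the conservation law remains a conservation law on the reference domain. -/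
open Matrix

private lemma comp3_hasFDerivAt {P : Type*} [NormedAddCommGroup P] [NormedSpace ℝ P]
    (b : P → Fin 3 → ℝ) {p : P} (hb : DifferentiableAt ℝ b p) (m : Fin 3) :
    HasFDerivAt (fun x => b x m)
      ((ContinuousLinearMap.proj m : (Fin 3 → ℝ) →L[ℝ] ℝ).comp (fderiv ℝ b p)) p :=
  (ContinuousLinearMap.proj m : (Fin 3 → ℝ) →L[ℝ] ℝ).hasFDerivAt.comp p hb.hasFDerivAt

private lemma crossdot_fderiv {P : Type*} [NormedAddCommGroup P] [NormedSpace ℝ P]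
    (b c d : P → Fin 3 → ℝ) {p : P}
    (hb : DifferentiableAt ℝ b p) (hc : DifferentiableAt ℝ c p) (hd : DifferentiableAt ℝ d p)
    (v : P) :
    fderiv ℝ (fun x => crossProduct (b x) (c x) ⬝ᵥ d x) p v =
      crossProduct (fderiv ℝ b p v) (c p) ⬝ᵥ d p
      + crossProduct (b p) (fderiv ℝ c p v) ⬝ᵥ d p
      + crossProduct (b p) (c p) ⬝ᵥ fderiv ℝ d p v := by
  have hb' := fun m => comp3_hasFDerivAt b hb m
  have hc' := fun m => comp3_hasFDerivAt c hc m
  have hd' := fun m => comp3_hasFDerivAt d hd m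
  have hfun : (fun x => crossProduct (b x) (c x) ⬝ᵥ d x)
      = fun x => (b x 1 * c x 2 - b x 2 * c x 1) * d x 0
          + ((b x 2 * c x 0 - b x 0 * c x 2) * d x 1
          + (b x 0 * c x 1 - b x 1 * c x 0) * d x 2) := by
    funext x; simp [cross_apply, dotProduct, Fin.sum_univ_three]; ring
  have H := ((((hb' 1).mul (hc' 2)).sub ((hb' 2).mul (hc' 1))).mul (hd' 0)).add
    (((((hb' 2).mul (hc' 0)).sub ((hb' 0).mul (hc' 2))).mul (hd' 1)).add
     ((((hb' 0).mul (hc' 1)).sub ((hb' 1).mul (hc' 0))).mul (hd' 2)))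
  have H' : HasFDerivAt (fun x => (b x 1 * c x 2 - b x 2 * c x 1) * d x 0
          + ((b x 2 * c x 0 - b x 0 * c x 2) * d x 1
          + (b x 0 * c x 1 - b x 1 * c x 0) * d x 2)) _ p := H
  rw [hfun, H'.fderiv]
  simp [cross_apply, dotProduct, Fin.sum_univ_three, smul_eq_mul]
  ring

/-- **A conservation law remains a conservation law on the reference domain.**
If `u, f` are continuously differentiable and satisfy `∂u/∂t + div_x f = 0`
everywhere, and `X(ξ,τ)` is a twice continuously differentiable time-dependent
mapping with covariant basis `a i = ∂X/∂ξ i`, Jacobian `𝒥 = a₁ ⋅ (a₂ × a₃)` and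
mesh velocity `X_τ`, then the pullbacks `U(ξ,τ) = u(X(ξ,τ),τ)`,
`F(ξ,τ) = f(X(ξ,τ),τ)` satisfy the mapped conservation law
`∂(𝒥U)/∂τ + Σ_{(i,j,k) cyclic} ∂/∂ξ i [(a j × a k) ⋅ (F − U X_τ)] = 0`. -/
theorem mapped_conservation_law
    (u : (Fin 3 → ℝ) × ℝ → ℝ) (hu : ContDiff ℝ 1 u)
    (f : (Fin 3 → ℝ) × ℝ → (Fin 3 → ℝ)) (hf : ContDiff ℝ 1 f)
    (hcons : ∀ p : (Fin 3 → ℝ) × ℝ,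
      fderiv ℝ u p (0, 1) + ∑ m : Fin 3, fderiv ℝ f p (Pi.single m 1, 0) m = 0)
    (X : (Fin 3 → ℝ) × ℝ → (Fin 3 → ℝ)) (hX : ContDiff ℝ 2 X)
    (a : Fin 3 → (Fin 3 → ℝ) × ℝ → (Fin 3 → ℝ))
    (ha : ∀ i p, a i p = fderiv ℝ X p (Pi.single i 1, 0))
    (Xτ : (Fin 3 → ℝ) × ℝ → (Fin 3 → ℝ))
    (hXτ : ∀ p, Xτ p = fderiv ℝ X p (0, 1))
    (J : (Fin 3 → ℝ) × ℝ → ℝ)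
    (hJ : ∀ p, J p = a 0 p ⬝ᵥ crossProduct (a 1 p) (a 2 p))
    (U : (Fin 3 → ℝ) × ℝ → ℝ) (hU : ∀ p : (Fin 3 → ℝ) × ℝ, U p = u (X p, p.2))
    (F : (Fin 3 → ℝ) × ℝ → (Fin 3 → ℝ)) (hF : ∀ p : (Fin 3 → ℝ) × ℝ, F p = f (X p, p.2))
    (p : (Fin 3 → ℝ) × ℝ) :
    fderiv ℝ (fun x => J x * U x) p (0, 1)
      + fderiv ℝ (fun x => crossProduct (a 1 x) (a 2 x) ⬝ᵥ (F x - U x • Xτ x)) p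
          (Pi.single 0 1, 0)
      + fderiv ℝ (fun x => crossProduct (a 2 x) (a 0 x) ⬝ᵥ (F x - U x • Xτ x)) p
          (Pi.single 1 1, 0)
      + fderiv ℝ (fun x => crossProduct (a 0 x) (a 1 x) ⬝ᵥ (F x - U x • Xτ x)) p
          (Pi.single 2 1, 0) = 0 := by
  -- basic differentiability facts
  have hXd : Differentiable ℝ X := hX.differentiable two_ne_zero
  have hDXd : Differentiable ℝ (fderiv ℝ X) :=
    (hX.fderiv_right (m := 1) (by norm_num)).differentiable one_ne_zero
  have hKd : ∀ v : (Fin 3 → ℝ) × ℝ,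
      Differentiable ℝ (fun x : (Fin 3 → ℝ) × ℝ => fderiv ℝ X x v) :=
    fun v => hDXd.clm_apply (differentiable_const v)
  -- second derivative symmetry
  have hclm : ∀ v w : (Fin 3 → ℝ) × ℝ,
      fderiv ℝ (fun x => fderiv ℝ X x v) p w = fderiv ℝ (fderiv ℝ X) p w v := by
    intro v w
    rw [fderiv_clm_apply (hDXd p) (differentiableAt_const v)]
    simp
  have hsymm : ∀ v w : (Fin 3 → ℝ) × ℝ,
      fderiv ℝ (fun x => fderiv ℝ X x v) p w = fderiv ℝ (fun x => fderiv ℝ X x w) p v := by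
    intro v w
    rw [hclm, hclm]
    exact second_derivative_symmetric (fun y => (hXd y).hasFDerivAt) (hDXd p).hasFDerivAt w v
  -- chain rule for the pullbacks
  have hφ : ∀ x : (Fin 3 → ℝ) × ℝ,
      HasFDerivAt (fun y : (Fin 3 → ℝ) × ℝ => (X y, y.2))
        ((fderiv ℝ X x).prod (ContinuousLinearMap.snd ℝ (Fin 3 → ℝ) ℝ)) x :=
    fun x => ((hXd x).hasFDerivAt).prodMk hasFDerivAt_snd
  have hUv : ∀ v : (Fin 3 → ℝ) × ℝ,
      fderiv ℝ (fun x : (Fin 3 → ℝ) × ℝ => u (X x, x.2)) p v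
        = fderiv ℝ u (X p, p.2) (fderiv ℝ X p v, v.2) := by
    intro v
    have H : HasFDerivAt (fun x : (Fin 3 → ℝ) × ℝ => u (X x, x.2))
        ((fderiv ℝ u (X p, p.2)).comp
          ((fderiv ℝ X p).prod (ContinuousLinearMap.snd ℝ (Fin 3 → ℝ) ℝ))) p :=
      (hu.differentiable one_ne_zero (X p, p.2)).hasFDerivAt.comp p (hφ p)
    rw [H.fderiv]; rfl
  have hFv : ∀ v : (Fin 3 → ℝ) × ℝ,
      fderiv ℝ (fun x : (Fin 3 → ℝ) × ℝ => f (X x, x.2)) p v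
        = fderiv ℝ f (X p, p.2) (fderiv ℝ X p v, v.2) := by
    intro v
    have H : HasFDerivAt (fun x : (Fin 3 → ℝ) × ℝ => f (X x, x.2))
        ((fderiv ℝ f (X p, p.2)).comp
          ((fderiv ℝ X p).prod (ContinuousLinearMap.snd ℝ (Fin 3 → ℝ) ℝ))) p :=
      (hf.differentiable one_ne_zero (X p, p.2)).hasFDerivAt.comp p (hφ p)
    rw [H.fderiv]; rfl
  have hUd : DifferentiableAt ℝ (fun x : (Fin 3 → ℝ) × ℝ => u (X x, x.2)) p :=
    (hu.differentiable one_ne_zero (X p, p.2)).comp p (hφ p).differentiableAt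
  have hFd : DifferentiableAt ℝ (fun x : (Fin 3 → ℝ) × ℝ => f (X x, x.2)) p :=
    (hf.differentiable one_ne_zero (X p, p.2)).comp p (hφ p).differentiableAt
  -- decomposition of tangent vectors and gradient expansions
  have hdec : ∀ w : Fin 3 → ℝ, ((w, (0:ℝ)) : (Fin 3 → ℝ) × ℝ)
      = ∑ m : Fin 3, w m • ((Pi.single m 1 : Fin 3 → ℝ), (0:ℝ)) := by
    intro w
    rw [Prod.ext_iff]
    constructor
    · rw [Prod.fst_sum]
      simp only [Prod.smul_mk]
      funext j
      simp [Pi.single_apply, Finset.sum_apply]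
    · rw [Prod.snd_sum]; simp
  have hgu0 : ∀ w : Fin 3 → ℝ, fderiv ℝ u (X p, p.2) (w, 0)
      = ∑ m : Fin 3, w m * fderiv ℝ u (X p, p.2) (Pi.single m 1, 0) := by
    intro w
    rw [hdec w, map_sum]
    simp only [_root_.map_smul, smul_eq_mul]
  have hgf : ∀ w : Fin 3 → ℝ, fderiv ℝ f (X p, p.2) (w, 0)
      = ∑ m : Fin 3, w m • fderiv ℝ f (X p, p.2) (Pi.single m 1, 0) := by
    intro w
    rw [hdec w, map_sum]
    simp only [_root_.map_smul]
  have hgu1 : fderiv ℝ u (X p, p.2) (fderiv ℝ X p (0, 1), 1)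
      = fderiv ℝ u (X p, p.2) (0, 1)
        + ∑ m : Fin 3, fderiv ℝ X p (0, 1) m * fderiv ℝ u (X p, p.2) (Pi.single m 1, 0) := by
    have h1 : ((fderiv ℝ X p (0, 1), (1:ℝ)) : (Fin 3 → ℝ) × ℝ)
        = ((0, 1) : (Fin 3 → ℝ) × ℝ) + (fderiv ℝ X p (0, 1), 0) := by
      rw [Prod.ext_iff]; constructor <;> simp
    rw [h1, map_add, hgu0]
  -- derivatives of the combined flux
  have hXτd : DifferentiableAt ℝ (fun x : (Fin 3 → ℝ) × ℝ => fderiv ℝ X x (0, 1)) p :=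
    (hKd (0, 1)) p
  have hdd : DifferentiableAt ℝ
      (fun x : (Fin 3 → ℝ) × ℝ => f (X x, x.2) - u (X x, x.2) • fderiv ℝ X x (0, 1)) p :=
    hFd.sub (hUd.smul hXτd)
  have hdval : ∀ v : (Fin 3 → ℝ) × ℝ,
      fderiv ℝ (fun x : (Fin 3 → ℝ) × ℝ =>
          f (X x, x.2) - u (X x, x.2) • fderiv ℝ X x (0, 1)) p v
      = fderiv ℝ (fun x : (Fin 3 → ℝ) × ℝ => f (X x, x.2)) p v
        - (u (X p, p.2) • fderiv ℝ (fun x => fderiv ℝ X x (0, 1)) p v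
           + fderiv ℝ (fun x : (Fin 3 → ℝ) × ℝ => u (X x, x.2)) p v • fderiv ℝ X p (0, 1)) := by
    intro v
    rw [fderiv_fun_sub (g := fun x => u (X x, x.2) • fderiv ℝ X x (0, 1)) hFd (hUd.smul hXτd), fderiv_fun_smul hUd hXτd]
    simp
  have hd0d : DifferentiableAt ℝ
      (fun x : (Fin 3 → ℝ) × ℝ => u (X x, x.2) • fderiv ℝ X x (Pi.single 0 1, 0)) p :=
    hUd.smul ((hKd _) p)
  have hd0val : ∀ v : (Fin 3 → ℝ) × ℝ,
      fderiv ℝ (fun x : (Fin 3 → ℝ) × ℝ =>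
          u (X x, x.2) • fderiv ℝ X x (Pi.single 0 1, 0)) p v
      = u (X p, p.2) • fderiv ℝ (fun x => fderiv ℝ X x (Pi.single 0 1, 0)) p v
        + fderiv ℝ (fun x : (Fin 3 → ℝ) × ℝ => u (X x, x.2)) p v
            • fderiv ℝ X p (Pi.single 0 1, 0) := by
    intro v
    rw [fderiv_fun_smul hUd ((hKd _) p)]
    simp
  -- rewrite the goal
  simp only [hJ, ha, hXτ, hU, hF]
  have hJU : (fun x : (Fin 3 → ℝ) × ℝ =>
        (fderiv ℝ X x (Pi.single 0 1, 0) ⬝ᵥ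
          crossProduct (fderiv ℝ X x (Pi.single 1 1, 0)) (fderiv ℝ X x (Pi.single 2 1, 0)))
          * u (X x, x.2))
      = fun x => crossProduct (fderiv ℝ X x (Pi.single 1 1, 0)) (fderiv ℝ X x (Pi.single 2 1, 0))
          ⬝ᵥ (u (X x, x.2) • fderiv ℝ X x (Pi.single 0 1, 0)) := by
    funext x
    simp [dotProduct, Fin.sum_univ_three, cross_apply]
    ring
  rw [hJU]
  rw [crossdot_fderiv (fun x => fderiv ℝ X x (Pi.single 1 1, 0))
        (fun x => fderiv ℝ X x (Pi.single 2 1, 0))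
        (fun x => u (X x, x.2) • fderiv ℝ X x (Pi.single 0 1, 0))
        ((hKd _) p) ((hKd _) p) hd0d (0, 1),
      crossdot_fderiv (fun x => fderiv ℝ X x (Pi.single 1 1, 0))
        (fun x => fderiv ℝ X x (Pi.single 2 1, 0))
        (fun x => f (X x, x.2) - u (X x, x.2) • fderiv ℝ X x (0, 1))
        ((hKd _) p) ((hKd _) p) hdd (Pi.single 0 1, 0),
      crossdot_fderiv (fun x => fderiv ℝ X x (Pi.single 2 1, 0))
        (fun x => fderiv ℝ X x (Pi.single 0 1, 0))
        (fun x => f (X x, x.2) - u (X x, x.2) • fderiv ℝ X x (0, 1))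
        ((hKd _) p) ((hKd _) p) hdd (Pi.single 1 1, 0),
      crossdot_fderiv (fun x => fderiv ℝ X x (Pi.single 0 1, 0))
        (fun x => fderiv ℝ X x (Pi.single 1 1, 0))
        (fun x => f (X x, x.2) - u (X x, x.2) • fderiv ℝ X x (0, 1))
        ((hKd _) p) ((hKd _) p) hdd (Pi.single 2 1, 0)]
  rw [hd0val, hdval, hdval, hdval]
  -- canonicalize second derivatives using symmetry
  rw [hsymm (Pi.single 1 1, 0) (0, 1), hsymm (Pi.single 2 1, 0) (0, 1),
      hsymm (Pi.single 0 1, 0) (0, 1),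
      hsymm (Pi.single 0 1, 0) (Pi.single 1 1, 0),
      hsymm (Pi.single 0 1, 0) (Pi.single 2 1, 0),
      hsymm (Pi.single 1 1, 0) (Pi.single 2 1, 0)]
  -- chain rule
  simp only [hUv, hFv, Prod.snd]
  rw [hgu0 (fderiv ℝ X p (Pi.single 0 1, 0)), hgu0 (fderiv ℝ X p (Pi.single 1 1, 0)),
      hgu0 (fderiv ℝ X p (Pi.single 2 1, 0)), hgu1,
      hgf (fderiv ℝ X p (Pi.single 0 1, 0)), hgf (fderiv ℝ X p (Pi.single 1 1, 0)),
      hgf (fderiv ℝ X p (Pi.single 2 1, 0))]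
  have hc := hcons (X p, p.2)
  rw [Fin.sum_univ_three] at hc
  have hut : fderiv ℝ u (X p, p.2) (0, 1)
      = -(fderiv ℝ f (X p, p.2) (Pi.single 0 1, 0) 0 + fderiv ℝ f (X p, p.2) (Pi.single 1 1, 0) 1
          + fderiv ℝ f (X p, p.2) (Pi.single 2 1, 0) 2) := by linarith
  rw [hut]
  simp [cross_apply, dotProduct, Fin.sum_univ_three, smul_eq_mul, Pi.sub_apply, Pi.add_apply,
    Pi.smul_apply]
  ring
end

section
/- Let E = [−1,1]³ and T > 0. Let J, vⁱ (i=1,2,3), Ãⁱ and q be continuously differentiable on E × [0,T], with each Ãⁱ(ξ,τ) symmetric, set 𝒜ⁱ = Ãⁱ − vⁱ·Id, and assume the geometric conservation law ∂J/∂τ = Σᵢ ∂vⁱ/∂ξⁱ holds on E × [0,T]. If q satisfies the conservative form ∂(Jq)/∂τ + Σᵢ₌₁³ ∂(𝒜ⁱq)/∂ξⁱ = 0 on E × [0,T], then for every τ ∈ [0,T] the energy identity holds: d/dτ ∫_E qᵀq J dξ + ∫_E Σᵢ₌₁³ ∂/∂ξⁱ ( qᵀ 𝒜ⁱ q ) dξ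 + ∫_E qᵀ (Σᵢ₌₁³ ∂Ãⁱ/∂ξⁱ) q dξ = 0. -/
open Matrix MeasureTheory

private lemma pull_neg2' {m : ℕ} (f : Fin m → ℝ) :
    ∑ a, -(2 * f a) = -(2 * ∑ a, f a) := by
  rw [Finset.sum_neg_distrib, ← Finset.mul_sum]

private lemma sum_identity' {m : ℕ} (Q dqt : Fin m → ℝ) (dq : Fin 3 → Fin m → ℝ)
    (J0 dJ : ℝ) (dV : Fin 3 → ℝ) (G dG dA : Fin 3 → Fin m → Fin m → ℝ)
    (hGsym : ∀ i a b, G i a b = G i b a)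
    (hdG : ∀ i a b, dG i a b = dA i a b - (if a = b then (1:ℝ) else 0) * dV i)
    (hdJ : dJ = ∑ i, dV i)
    (hP : ∀ a, J0 * dqt a + Q a * dJ + ∑ i, ∑ b, (G i a b * dq i b + Q b * dG i a b) = 0) :
    (∑ a, Q a * Q a) * dJ + J0 * (∑ a, (Q a * dqt a + Q a * dqt a))
      = -(∑ i, ∑ a, (Q a * (∑ b, (G i a b * dq i b + Q b * dG i a b))
            + (∑ b, G i a b * Q b) * dq i a))
        - ∑ i, ∑ a, Q a * (∑ b, Q b * dA i a b) := by
  have hP' : ∀ a, J0 * dqt a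
      = -(Q a * dJ) - ∑ i, ∑ b, (G i a b * dq i b + Q b * dG i a b) := by
    intro a; linarith [hP a]
  have hsplit : ∀ a, Q a * (∑ i, ∑ b, (G i a b * dq i b + Q b * dG i a b))
      = (∑ i, ∑ b, Q a * (G i a b * dq i b)) + ∑ i, ∑ b, Q a * (Q b * dG i a b) := by
    intro a
    simp only [Finset.mul_sum, mul_add, Finset.sum_add_distrib]
  set SG := ∑ a, ∑ i : Fin 3, ∑ b, Q a * (G i a b * dq i b) with hSG
  set SD := ∑ a, ∑ i : Fin 3, ∑ b, Q a * (Q b * dG i a b) with hSD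
  set u := ∑ a, Q a * Q a with hu
  have hL2 : J0 * (∑ a, (Q a * dqt a + Q a * dqt a)) = -(2*(u*dJ + (SG + SD))) := by
    rw [Finset.mul_sum]
    calc (∑ a, J0 * (Q a * dqt a + Q a * dqt a))
        = ∑ a, -(2*(Q a * Q a * dJ
            + ((∑ i, ∑ b, Q a * (G i a b * dq i b)) + ∑ i, ∑ b, Q a * (Q b * dG i a b)))) := by
          refine Finset.sum_congr rfl fun a _ => ?_
          have e1 : J0 * (Q a * dqt a + Q a * dqt a) = 2 * (Q a * (J0 * dqt a)) := by ring
          rw [e1, hP' a, mul_sub, mul_neg, hsplit a]; ring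
      _ = -(2*(u*dJ + (SG + SD))) := by
          rw [pull_neg2', Finset.sum_add_distrib, Finset.sum_add_distrib, hu, hSG, hSD,
            Finset.sum_mul]
  have hR1 : (∑ i, ∑ a, (Q a * (∑ b, (G i a b * dq i b + Q b * dG i a b))
        + (∑ b, G i a b * Q b) * dq i a)) = 2*SG + SD := by
    have e : ∀ i : Fin 3, ∀ a, Q a * (∑ b, (G i a b * dq i b + Q b * dG i a b))
        = (∑ b, Q a * (G i a b * dq i b)) + ∑ b, Q a * (Q b * dG i a b) := by
      intro i a; simp only [Finset.mul_sum, mul_add, Finset.sum_add_distrib]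
    have e2 : ∀ i : Fin 3, (∑ a, (∑ b, G i a b * Q b) * dq i a)
        = ∑ a, ∑ b, Q a * (G i a b * dq i b) := by
      intro i
      calc (∑ a, (∑ b, G i a b * Q b) * dq i a)
          = ∑ a, ∑ b, G i a b * Q b * dq i a := by
            refine Finset.sum_congr rfl fun a _ => ?_; rw [Finset.sum_mul]
        _ = ∑ b, ∑ a, G i b a * Q a * dq i b := by
            rw [Finset.sum_comm]
        _ = ∑ b, ∑ a, Q a * (G i a b * dq i b) := by
            refine Finset.sum_congr rfl fun b _ => Finset.sum_congr rfl fun a _ => ?_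
            rw [hGsym i b a]; ring
        _ = ∑ a, ∑ b, Q a * (G i a b * dq i b) := by rw [Finset.sum_comm]
    calc (∑ i, ∑ a, (Q a * (∑ b, (G i a b * dq i b + Q b * dG i a b))
            + (∑ b, G i a b * Q b) * dq i a))
        = ∑ i, ((∑ a, ((∑ b, Q a * (G i a b * dq i b)) + ∑ b, Q a * (Q b * dG i a b)))
            + ∑ a, ∑ b, Q a * (G i a b * dq i b)) := by
          refine Finset.sum_congr rfl fun i _ => ?_
          rw [Finset.sum_add_distrib, e2 i]
          congr 1
          exact Finset.sum_congr rfl fun a _ => e i a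
      _ = 2*SG + SD := by
          simp only [Finset.sum_add_distrib]
          rw [hSG, hSD]
          rw [Finset.sum_comm (f := fun i a => ∑ b, Q a * (G i a b * dq i b))]
          rw [Finset.sum_comm (f := fun i a => ∑ b, Q a * (Q b * dG i a b))]
          ring
  have hR3 : (∑ i, ∑ a, Q a * (∑ b, Q b * dA i a b)) = SD + u * dJ := by
    have e : ∀ i : Fin 3, ∀ a, Q a * (∑ b, Q b * dA i a b)
        = (∑ b, Q a * (Q b * dG i a b)) + Q a * Q a * dV i := by
      intro i a
      have h' : ∀ b, Q a * (Q b * dG i a b)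
          = Q a * (Q b * dA i a b) - (if a = b then Q a * Q a * dV i else 0) := by
        intro b; rw [hdG i a b]
        by_cases h : a = b
        · simp [h]; ring
        · simp [h]
      simp only [h', Finset.sum_sub_distrib, Finset.sum_ite_eq, Finset.mem_univ, if_true]
      rw [← Finset.mul_sum]
      ring
    calc (∑ i, ∑ a, Q a * (∑ b, Q b * dA i a b))
        = ∑ i, ∑ a, ((∑ b, Q a * (Q b * dG i a b)) + Q a * Q a * dV i) := by
          exact Finset.sum_congr rfl fun i _ => Finset.sum_congr rfl fun a _ => e i a
      _ = SD + u * dJ := by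
          simp only [Finset.sum_add_distrib]
          rw [hdJ, Finset.mul_sum]
          congr 1
          · rw [hSD]; exact Finset.sum_comm
          · refine Finset.sum_congr rfl fun i _ => ?_
            rw [hu, Finset.sum_mul]
  rw [hL2, hR1, hR3]; ring

private lemma fderiv_comp_apply' {n : ℕ} {f : (Fin 3 → ℝ) × ℝ → (Fin n → ℝ)}
    {p : (Fin 3 → ℝ) × ℝ} (hf : DifferentiableAt ℝ f p) (a : Fin n) (w : (Fin 3 → ℝ) × ℝ) :
    fderiv ℝ (fun x => f x a) p w = fderiv ℝ f p w a := by
  have h := fderiv_pi (𝕜 := ℝ) (φ := fun a x => f x a) (x := p)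
    (fun i => differentiableAt_pi.1 hf i)
  rw [show (fun x a => f x a) = f from rfl] at h
  rw [h]; rfl

private lemma fderiv_mul_apply' {c d : (Fin 3 → ℝ) × ℝ → ℝ} {p w : (Fin 3 → ℝ) × ℝ}
    (hc : DifferentiableAt ℝ c p) (hd : DifferentiableAt ℝ d p) :
    fderiv ℝ (fun x => c x * d x) p w = c p * fderiv ℝ d p w + d p * fderiv ℝ c p w := by
  rw [fderiv_fun_mul hc hd]; simp [smul_eq_mul]

private lemma fderiv_sum_apply' {κ : Type*} {s : Finset κ} {f : κ → (Fin 3 → ℝ) × ℝ → ℝ}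
    {p w : (Fin 3 → ℝ) × ℝ} (h : ∀ b ∈ s, DifferentiableAt ℝ (f b) p) :
    fderiv ℝ (fun x => ∑ b ∈ s, f b x) p w = ∑ b ∈ s, fderiv ℝ (f b) p w := by
  rw [fderiv_fun_sum h]; simp

/-- **Energy identity for the mapped conservation law.** On the reference cube
`E = [−1,1]³` and time interval `[0,T]`, with `𝒜 i = Ã i − v i • Id`, symmetric
`Ã i`, the geometric conservation law and the conservative form
`∂(Jq)/∂τ + Σ i ∂(𝒜 i q)/∂ξ i = 0` in force, the energy identity
`d/dτ ∫_E qᵀq J dξ + ∫_E Σ i ∂/∂ξ i (qᵀ 𝒜 i q) dξ + ∫_E qᵀ(Σ i ∂Ã i/∂ξ i)q dξ = 0`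
holds for every `τ ∈ [0,T]`.  (Functions are taken continuously differentiable
on the ambient space; `∂Ã i/∂ξ i ⋅ q(p)` is written as the derivative of
`x ↦ Ã i x *ᵥ q p` with the argument of `q` frozen.) -/
theorem energy_identity
    (m : ℕ) (hm : 1 ≤ m) (T : ℝ) (hT : 0 < T)
    (E : Set (Fin 3 → ℝ)) (hE : E = Set.Icc (fun _ => (-1 : ℝ)) (fun _ => (1 : ℝ)))
    (J : (Fin 3 → ℝ) × ℝ → ℝ) (hJ : ContDiff ℝ 1 J)
    (v : Fin 3 → ((Fin 3 → ℝ) × ℝ → ℝ)) (hv : ∀ i, ContDiff ℝ 1 (v i))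
    (At : Fin 3 → ((Fin 3 → ℝ) × ℝ → Matrix (Fin m) (Fin m) ℝ))
    (hAt : ∀ i a b, ContDiff ℝ 1 (fun x => At i x a b))
    (hAtsymm : ∀ i, ∀ p ∈ E ×ˢ Set.Icc (0 : ℝ) T, (At i p).IsSymm)
    (q : (Fin 3 → ℝ) × ℝ → (Fin m → ℝ)) (hq : ContDiff ℝ 1 q)
    (𝒜 : Fin 3 → ((Fin 3 → ℝ) × ℝ → Matrix (Fin m) (Fin m) ℝ))
    (h𝒜 : ∀ i x, 𝒜 i x = At i x - v i x • (1 : Matrix (Fin m) (Fin m) ℝ))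
    (hGCL : ∀ p ∈ E ×ˢ Set.Icc (0 : ℝ) T,
      fderiv ℝ J p (0, 1) = ∑ i : Fin 3, fderiv ℝ (v i) p (Pi.single i 1, 0))
    (hPDE : ∀ p ∈ E ×ˢ Set.Icc (0 : ℝ) T,
      fderiv ℝ (fun x => J x • q x) p (0, 1)
        + ∑ i : Fin 3, fderiv ℝ (fun x => 𝒜 i x *ᵥ q x) p (Pi.single i 1, 0) = 0) :
    ∀ τ ∈ Set.Icc (0 : ℝ) T,
      HasDerivAt (fun t => ∫ ξ in E, (q (ξ, t) ⬝ᵥ q (ξ, t)) * J (ξ, t))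
        (-(∫ ξ in E, ∑ i : Fin 3,
              fderiv ℝ (fun x => q x ⬝ᵥ (𝒜 i x *ᵥ q x)) (ξ, τ) (Pi.single i 1, 0))
          - ∫ ξ in E, ∑ i : Fin 3,
              q (ξ, τ) ⬝ᵥ fderiv ℝ (fun x => At i x *ᵥ q (ξ, τ)) (ξ, τ) (Pi.single i 1, 0)) τ := by
  intro τ hτ
  have hEmeas : MeasurableSet E := by rw [hE]; exact measurableSet_Icc
  have hEcomp : IsCompact E := by rw [hE]; exact isCompact_Icc
  -- component regularity
  have hqa : ∀ a, ContDiff ℝ 1 fun x : (Fin 3 → ℝ) × ℝ => q x a := fun a => contDiff_pi.mp hq a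
  have h𝒜e : ∀ i a b, (fun x : (Fin 3 → ℝ) × ℝ => 𝒜 i x a b)
      = fun x => At i x a b - v i x * (if a = b then (1:ℝ) else 0) := by
    intro i a b; funext x; rw [h𝒜]
    simp [Matrix.sub_apply, Matrix.smul_apply, Matrix.one_apply, smul_eq_mul]
  have h𝒜c : ∀ i a b, ContDiff ℝ 1 fun x : (Fin 3 → ℝ) × ℝ => 𝒜 i x a b := by
    intro i a b; rw [h𝒜e]; exact (hAt i a b).sub ((hv i).mul contDiff_const)
  set F : (Fin 3 → ℝ) × ℝ → ℝ := fun x => (q x ⬝ᵥ q x) * J x with hFdef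
  have hFe : F = fun x => (∑ a, q x a * q x a) * J x := by
    funext x; rw [hFdef]; simp [dotProduct]
  have hQQc : ContDiff ℝ 1 fun x : (Fin 3 → ℝ) × ℝ => ∑ a, q x a * q x a :=
    ContDiff.sum fun a _ => (hqa a).mul (hqa a)
  have hFc : ContDiff ℝ 1 F := by rw [hFe]; exact hQQc.mul hJ
  have hdotc : ∀ i, ContDiff ℝ 1 fun x : (Fin 3 → ℝ) × ℝ => q x ⬝ᵥ (𝒜 i x *ᵥ q x) := by
    intro i
    have e : (fun x : (Fin 3 → ℝ) × ℝ => q x ⬝ᵥ (𝒜 i x *ᵥ q x))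
        = fun x => ∑ a, q x a * ∑ b, 𝒜 i x a b * q x b := by
      funext x; simp [Matrix.mulVec, dotProduct]
    rw [e]
    exact ContDiff.sum fun a _ => (hqa a).mul (ContDiff.sum fun b _ => (h𝒜c i a b).mul (hqa b))
  -- directional derivative formulas (valid at every point)
  have hF1 : ∀ p : (Fin 3 → ℝ) × ℝ, fderiv ℝ F p (0,1)
      = (∑ a, q p a * q p a) * fderiv ℝ J p (0,1)
        + J p * (∑ a, (q p a * fderiv ℝ (fun x => q x a) p (0,1)
            + q p a * fderiv ℝ (fun x => q x a) p (0,1))) := by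
    intro p
    rw [hFe, fderiv_mul_apply' (hQQc.differentiable one_ne_zero p) (hJ.differentiable one_ne_zero p)]
    congr 1
    rw [fderiv_sum_apply' (fun a _ =>
      (((hqa a).mul (hqa a)).differentiable one_ne_zero p))]
    congr 1
    exact Finset.sum_congr rfl fun a _ =>
      fderiv_mul_apply' ((hqa a).differentiable one_ne_zero p) ((hqa a).differentiable one_ne_zero p)
  have h𝒜q : ∀ i, ContDiff ℝ 1 fun x : (Fin 3 → ℝ) × ℝ => 𝒜 i x *ᵥ q x := by
    intro i; rw [contDiff_pi]; intro a
    have e : (fun x : (Fin 3 → ℝ) × ℝ => (𝒜 i x *ᵥ q x) a)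
        = fun x => ∑ b, 𝒜 i x a b * q x b := by
      funext x; simp [Matrix.mulVec, dotProduct]
    rw [e]; exact ContDiff.sum fun b _ => (h𝒜c i a b).mul (hqa b)
  have h2 : ∀ (i) (p : (Fin 3 → ℝ) × ℝ) (w) (a),
      fderiv ℝ (fun x => 𝒜 i x *ᵥ q x) p w a
        = ∑ b, (𝒜 i p a b * fderiv ℝ (fun x => q x b) p w
            + q p b * fderiv ℝ (fun x => 𝒜 i x a b) p w) := by
    intro i p w a
    rw [← fderiv_comp_apply' ((h𝒜q i).differentiable one_ne_zero p) a w]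
    have e : (fun x : (Fin 3 → ℝ) × ℝ => (𝒜 i x *ᵥ q x) a)
        = fun x => ∑ b, 𝒜 i x a b * q x b := by
      funext x; simp [Matrix.mulVec, dotProduct]
    rw [e, fderiv_sum_apply' (f := fun b x => 𝒜 i x a b * q x b) (fun b _ =>
      ((h𝒜c i a b).differentiable one_ne_zero p).mul ((hqa b).differentiable one_ne_zero p))]
    exact Finset.sum_congr rfl fun b _ =>
      fderiv_mul_apply' ((h𝒜c i a b).differentiable one_ne_zero p) ((hqa b).differentiable one_ne_zero p)
  have h3 : ∀ (i) (p : (Fin 3 → ℝ) × ℝ) (w),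
      fderiv ℝ (fun x => q x ⬝ᵥ (𝒜 i x *ᵥ q x)) p w
        = ∑ a, (q p a * (∑ b, (𝒜 i p a b * fderiv ℝ (fun x => q x b) p w
              + q p b * fderiv ℝ (fun x => 𝒜 i x a b) p w))
            + (∑ b, 𝒜 i p a b * q p b) * fderiv ℝ (fun x => q x a) p w) := by
    intro i p w
    have e : (fun x : (Fin 3 → ℝ) × ℝ => q x ⬝ᵥ (𝒜 i x *ᵥ q x))
        = fun x => ∑ a, q x a * ∑ b, 𝒜 i x a b * q x b := by
      funext x; simp [Matrix.mulVec, dotProduct]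
    have hinner : ∀ a, DifferentiableAt ℝ (fun x : (Fin 3 → ℝ) × ℝ => ∑ b, 𝒜 i x a b * q x b) p :=
      fun a => (ContDiff.sum fun b _ =>
        (h𝒜c i a b).mul (hqa b)).differentiable one_ne_zero p
    rw [e, fderiv_sum_apply' (f := fun a x => q x a * ∑ b, 𝒜 i x a b * q x b) (fun a _ =>
      ((hqa a).differentiable one_ne_zero p).mul (hinner a))]
    refine Finset.sum_congr rfl fun a _ => ?_
    rw [fderiv_mul_apply' ((hqa a).differentiable one_ne_zero p) (hinner a)]
    congr 1
    rw [fderiv_sum_apply' (f := fun b x => 𝒜 i x a b * q x b) (fun b _ =>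
      ((h𝒜c i a b).differentiable one_ne_zero p).mul ((hqa b).differentiable one_ne_zero p))]
    congr 1
    exact Finset.sum_congr rfl fun b _ =>
      fderiv_mul_apply' ((h𝒜c i a b).differentiable one_ne_zero p) ((hqa b).differentiable one_ne_zero p)
  have hAtvc : ∀ i (c : Fin m → ℝ), ContDiff ℝ 1 fun x : (Fin 3 → ℝ) × ℝ => At i x *ᵥ c := by
    intro i c; rw [contDiff_pi]; intro a
    have e : (fun x : (Fin 3 → ℝ) × ℝ => (At i x *ᵥ c) a)
        = fun x => ∑ b, At i x a b * c b := by
      funext x; simp [Matrix.mulVec, dotProduct]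
    rw [e]; exact ContDiff.sum fun b _ => (hAt i a b).mul contDiff_const
  have h4 : ∀ (i) (p : (Fin 3 → ℝ) × ℝ) (w) (c : Fin m → ℝ) (a),
      fderiv ℝ (fun x => At i x *ᵥ c) p w a
        = ∑ b, c b * fderiv ℝ (fun x => At i x a b) p w := by
    intro i p w c a
    rw [← fderiv_comp_apply' ((hAtvc i c).differentiable one_ne_zero p) a w]
    have e : (fun x : (Fin 3 → ℝ) × ℝ => (At i x *ᵥ c) a)
        = fun x => ∑ b, At i x a b * c b := by
      funext x; simp [Matrix.mulVec, dotProduct]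
    rw [e, fderiv_sum_apply' (f := fun b x => At i x a b * c b) (fun b _ =>
      ((hAt i a b).differentiable one_ne_zero p).mul (differentiableAt_const _))]
    refine Finset.sum_congr rfl fun b _ => ?_
    rw [fderiv_mul_apply' ((hAt i a b).differentiable one_ne_zero p) (differentiableAt_const _)]
    simp
  -- the pointwise identity on E × {τ}
  have hpt : ∀ ξ ∈ E, fderiv ℝ F (ξ, τ) (0,1)
      = -(∑ i : Fin 3, fderiv ℝ (fun x => q x ⬝ᵥ (𝒜 i x *ᵥ q x)) (ξ, τ) (Pi.single i 1, 0))
        - ∑ i : Fin 3, q (ξ, τ) ⬝ᵥ fderiv ℝ (fun x => At i x *ᵥ q (ξ, τ)) (ξ, τ) (Pi.single i 1, 0) := by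
    intro ξ hξ
    have hp : ((ξ, τ) : (Fin 3 → ℝ) × ℝ) ∈ E ×ˢ Set.Icc (0 : ℝ) T := ⟨hξ, hτ⟩
    have hGsym : ∀ i a b, 𝒜 i (ξ, τ) a b = 𝒜 i (ξ, τ) b a := by
      intro i a b
      have hs := (hAtsymm i (ξ, τ) hp).apply a b
      rw [h𝒜 i]
      simp only [Matrix.sub_apply, Matrix.smul_apply, Matrix.one_apply, smul_eq_mul]
      rw [hs]
      congr 1
      by_cases h : a = b
      · simp [h]
      · rw [if_neg h, if_neg (fun hh : b = a => h hh.symm)]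
    have hdG : ∀ i a b, fderiv ℝ (fun x => 𝒜 i x a b) (ξ, τ) (Pi.single i 1, 0)
        = fderiv ℝ (fun x => At i x a b) (ξ, τ) (Pi.single i 1, 0)
          - (if a = b then (1:ℝ) else 0) * fderiv ℝ (v i) (ξ, τ) (Pi.single i 1, 0) := by
      intro i a b
      rw [h𝒜e i a b, fderiv_fun_sub ((hAt i a b).differentiable one_ne_zero _)
        (((hv i).mul contDiff_const).differentiable one_ne_zero _)]
      rw [fderiv_mul_const ((hv i).differentiable one_ne_zero _)]
      by_cases h : a = b <;>
        simp [h, ContinuousLinearMap.sub_apply, ContinuousLinearMap.smul_apply, smul_eq_mul]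
    have hP : ∀ a, J (ξ, τ) * fderiv ℝ (fun x => q x a) (ξ, τ) (0,1)
        + q (ξ, τ) a * fderiv ℝ J (ξ, τ) (0,1)
        + ∑ i : Fin 3, ∑ b, (𝒜 i (ξ, τ) a b * fderiv ℝ (fun x => q x b) (ξ, τ) (Pi.single i 1, 0)
            + q (ξ, τ) b * fderiv ℝ (fun x => 𝒜 i x a b) (ξ, τ) (Pi.single i 1, 0)) = 0 := by
      intro a
      have h0 := congrFun (hPDE (ξ, τ) hp) a
      simp only [Pi.add_apply, Finset.sum_apply, Pi.zero_apply] at h0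
      rw [← fderiv_comp_apply' (f := fun x => J x • q x) ((hJ.smul hq).differentiable one_ne_zero _) a (0,1)] at h0
      have e : (fun x : (Fin 3 → ℝ) × ℝ => (J x • q x) a) = fun x => J x * q x a := by
        funext x; simp [smul_eq_mul]
      rw [e, fderiv_mul_apply' (hJ.differentiable one_ne_zero _) ((hqa a).differentiable one_ne_zero _)] at h0
      simp only [h2] at h0
      exact h0
    rw [hF1 (ξ, τ)]
    simp only [h3]
    simp only [dotProduct]
    simp only [h4]
    exact sum_identity' (fun a => q (ξ, τ) a)
      (fun a => fderiv ℝ (fun x => q x a) (ξ, τ) (0,1))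
      (fun i a => fderiv ℝ (fun x => q x a) (ξ, τ) (Pi.single i 1, 0))
      (J (ξ, τ)) (fderiv ℝ J (ξ, τ) (0,1))
      (fun i => fderiv ℝ (v i) (ξ, τ) (Pi.single i 1, 0))
      (fun i a b => 𝒜 i (ξ, τ) a b)
      (fun i a b => fderiv ℝ (fun x => 𝒜 i x a b) (ξ, τ) (Pi.single i 1, 0))
      (fun i a b => fderiv ℝ (fun x => At i x a b) (ξ, τ) (Pi.single i 1, 0))
      hGsym hdG (hGCL (ξ, τ) hp) hP
  -- continuity of the integrands
  have hcurve : Continuous fun ξ : Fin 3 → ℝ => ((ξ, τ) : (Fin 3 → ℝ) × ℝ) :=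
    continuous_id.prodMk continuous_const
  have hAcont : Continuous fun ξ : Fin 3 → ℝ => ∑ i : Fin 3,
      fderiv ℝ (fun x => q x ⬝ᵥ (𝒜 i x *ᵥ q x)) (ξ, τ) (Pi.single i 1, 0) := by
    refine continuous_finset_sum _ fun i _ => ?_
    exact (ContinuousLinearMap.apply ℝ ℝ ((Pi.single i 1, 0) : (Fin 3 → ℝ) × ℝ)).continuous.comp
      (((hdotc i).continuous_fderiv one_ne_zero).comp hcurve)
  have hBcont : Continuous fun ξ : Fin 3 → ℝ => ∑ i : Fin 3,
      q (ξ, τ) ⬝ᵥ fderiv ℝ (fun x => At i x *ᵥ q (ξ, τ)) (ξ, τ) (Pi.single i 1, 0) := by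
    have e : (fun ξ : Fin 3 → ℝ => ∑ i : Fin 3,
        q (ξ, τ) ⬝ᵥ fderiv ℝ (fun x => At i x *ᵥ q (ξ, τ)) (ξ, τ) (Pi.single i 1, 0))
        = fun ξ => ∑ i : Fin 3, ∑ a, q (ξ, τ) a
            * ∑ b, q (ξ, τ) b * fderiv ℝ (fun x => At i x a b) (ξ, τ) (Pi.single i 1, 0) := by
      funext ξ
      refine Finset.sum_congr rfl fun i _ => ?_
      simp only [dotProduct]
      refine Finset.sum_congr rfl fun a _ => ?_
      rw [h4 i (ξ, τ) (Pi.single i 1, 0) (q (ξ, τ)) a]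
    rw [e]
    refine continuous_finset_sum _ fun i _ => continuous_finset_sum _ fun a _ => ?_
    refine Continuous.mul ((hqa a).continuous.comp hcurve) ?_
    refine continuous_finset_sum _ fun b _ => ?_
    refine Continuous.mul ((hqa b).continuous.comp hcurve) ?_
    exact (ContinuousLinearMap.apply ℝ ℝ ((Pi.single i 1, 0) : (Fin 3 → ℝ) × ℝ)).continuous.comp
      (((hAt i a b).continuous_fderiv one_ne_zero).comp hcurve)
  have hint1 : IntegrableOn (fun ξ : Fin 3 → ℝ => ∑ i : Fin 3,
      fderiv ℝ (fun x => q x ⬝ᵥ (𝒜 i x *ᵥ q x)) (ξ, τ) (Pi.single i 1, 0)) E volume :=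
    ContinuousOn.integrableOn_compact hEcomp hAcont.continuousOn
  have hint2 : IntegrableOn (fun ξ : Fin 3 → ℝ => ∑ i : Fin 3,
      q (ξ, τ) ⬝ᵥ fderiv ℝ (fun x => At i x *ᵥ q (ξ, τ)) (ξ, τ) (Pi.single i 1, 0)) E volume :=
    ContinuousOn.integrableOn_compact hEcomp hBcont.continuousOn
  -- step B : value of the integral of the time derivative
  have hBeq : (∫ ξ in E, fderiv ℝ F (ξ, τ) (0,1))
      = -(∫ ξ in E, ∑ i : Fin 3,
            fderiv ℝ (fun x => q x ⬝ᵥ (𝒜 i x *ᵥ q x)) (ξ, τ) (Pi.single i 1, 0))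
        - ∫ ξ in E, ∑ i : Fin 3,
            q (ξ, τ) ⬝ᵥ fderiv ℝ (fun x => At i x *ᵥ q (ξ, τ)) (ξ, τ) (Pi.single i 1, 0) := by
    calc (∫ ξ in E, fderiv ℝ F (ξ, τ) (0,1))
        = ∫ ξ in E, (-(∑ i : Fin 3,
              fderiv ℝ (fun x => q x ⬝ᵥ (𝒜 i x *ᵥ q x)) (ξ, τ) (Pi.single i 1, 0))
            - ∑ i : Fin 3,
              q (ξ, τ) ⬝ᵥ fderiv ℝ (fun x => At i x *ᵥ q (ξ, τ)) (ξ, τ) (Pi.single i 1, 0)) :=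
          setIntegral_congr_fun hEmeas (fun ξ hξ => hpt ξ hξ)
      _ = _ := by
          have hint1n : IntegrableOn (fun ξ : Fin 3 → ℝ => -(∑ i : Fin 3,
              fderiv ℝ (fun x => q x ⬝ᵥ (𝒜 i x *ᵥ q x)) (ξ, τ) (Pi.single i 1, 0))) E volume :=
            hint1.neg
          rw [integral_sub hint1n hint2, integral_neg]
  -- step A : differentiation under the integral sign
  have hF'contp : Continuous fun p : (Fin 3 → ℝ) × ℝ => fderiv ℝ F p (0,1) :=
    (ContinuousLinearMap.apply ℝ ℝ ((0,1) : (Fin 3 → ℝ) × ℝ)).continuous.comp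
      (hFc.continuous_fderiv one_ne_zero)
  have hK : IsCompact (E ×ˢ Set.Icc (τ-1) (τ+1)) := hEcomp.prod isCompact_Icc
  obtain ⟨M, hM⟩ := hK.exists_bound_of_continuousOn hF'contp.continuousOn
  have hstep := hasDerivAt_integral_of_dominated_loc_of_deriv_le
    (μ := volume.restrict E) (F := fun t (ξ : Fin 3 → ℝ) => F (ξ, t))
    (F' := fun t (ξ : Fin 3 → ℝ) => fderiv ℝ F (ξ, t) (0,1)) (x₀ := τ)
    (bound := fun _ => M) (Metric.ball_mem_nhds τ one_pos)
    (Filter.Eventually.of_forall fun t =>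
      (hFc.continuous.comp (continuous_id.prodMk continuous_const)).aestronglyMeasurable)
    (ContinuousOn.integrableOn_compact hEcomp
      (hFc.continuous.comp (continuous_id.prodMk continuous_const)).continuousOn)
    ((hF'contp.comp (continuous_id.prodMk continuous_const)).aestronglyMeasurable)
    ((ae_restrict_iff' hEmeas).2 (Filter.Eventually.of_forall fun ξ hξ t ht => by
      refine hM (ξ, t) ⟨hξ, ?_⟩
      rw [Real.ball_eq_Ioo] at ht
      exact Set.Ioo_subset_Icc_self ht))
    (integrableOn_const (hEcomp.measure_lt_top.ne))
    (Filter.Eventually.of_forall fun ξ t _ => by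
      have hline : HasDerivAt (fun s : ℝ => ((ξ, s) : (Fin 3 → ℝ) × ℝ)) ((0 : Fin 3 → ℝ), (1:ℝ)) t :=
        (hasDerivAt_const t ξ).prodMk (hasDerivAt_id t)
      exact (hFc.differentiable one_ne_zero (ξ, t)).hasFDerivAt.comp_hasDerivAt t hline)
  have hfinal := hstep.2
  rw [hBeq] at hfinal
  exact hfinal
end

section
/- In the setting of the well-posedness energy bound, if in addition the contravariant coefficient matrices have vanishing divergence, Σᵢ₌₁³ ∂Ãⁱ/∂ξⁱ ≡ 0 on E × [0,T] (in particular if each Ãⁱ is constant in ξ), then the weighted energy never grows: ∫_E J(ξ,T) ‖q(ξ,T)‖² dξ ≤ ∫_E J(ξ,0) ‖q(ξ,0)‖² dξ. -/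
open Matrix MeasureTheory
section helpers
variable {X : Type*} [NormedAddCommGroup X] [NormedSpace ℝ X] {m : ℕ} {p : X}

lemma hasFDerivAt_coord {g : X → Fin m → ℝ} (hg : DifferentiableAt ℝ g p) (a : Fin m) :
    HasFDerivAt (fun x => g x a) ((ContinuousLinearMap.proj a).comp (fderiv ℝ g p)) p :=
  ((ContinuousLinearMap.proj a : (Fin m → ℝ) →L[ℝ] ℝ).hasFDerivAt.comp p hg.hasFDerivAt :)

lemma diff_coord {g : X → Fin m → ℝ} (hg : DifferentiableAt ℝ g p) (a : Fin m) :
    DifferentiableAt ℝ (fun x => g x a) p := (hasFDerivAt_coord hg a).differentiableAt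

lemma fderiv_coord {g : X → Fin m → ℝ} (hg : DifferentiableAt ℝ g p) (a : Fin m) (w : X) :
    fderiv ℝ (fun x => g x a) p w = fderiv ℝ g p w a := by
  rw [(hasFDerivAt_coord hg a).fderiv]; rfl

lemma diff_dot {g h : X → Fin m → ℝ} (hg : DifferentiableAt ℝ g p)
    (hh : DifferentiableAt ℝ h p) :
    DifferentiableAt ℝ (fun x => g x ⬝ᵥ h x) p := by
  have e : (fun x => g x ⬝ᵥ h x) = fun x => ∑ a, g x a * h x a := by
    funext x; simp [dotProduct]
  rw [e]
  exact DifferentiableAt.fun_sum fun a _ => (diff_coord hg a).mul (diff_coord hh a)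

lemma fderiv_dot {g h : X → Fin m → ℝ} (hg : DifferentiableAt ℝ g p)
    (hh : DifferentiableAt ℝ h p) (w : X) :
    fderiv ℝ (fun x => g x ⬝ᵥ h x) p w
      = fderiv ℝ g p w ⬝ᵥ h p + g p ⬝ᵥ fderiv ℝ h p w := by
  have e : (fun x => g x ⬝ᵥ h x) = fun x => ∑ a, g x a * h x a := by
    funext x; simp [dotProduct]
  have hd : ∀ a ∈ Finset.univ, DifferentiableAt ℝ (fun x => g x a * h x a) p :=
    fun a _ => (diff_coord hg a).mul (diff_coord hh a)
  rw [e, fderiv_fun_sum hd, ContinuousLinearMap.sum_apply]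
  have hterm : ∀ a : Fin m, (fderiv ℝ (fun x => g x a * h x a) p) w
      = g p a * fderiv ℝ h p w a + h p a * fderiv ℝ g p w a := by
    intro a
    rw [fderiv_fun_mul (diff_coord hg a) (diff_coord hh a)]
    simp [fderiv_coord hg a w, fderiv_coord hh a w]
  simp only [hterm, dotProduct, Finset.sum_add_distrib]
  rw [add_comm]
  congr 1 <;> exact Finset.sum_congr rfl fun a _ => by ring

lemma diff_mulVec {M : X → Matrix (Fin m) (Fin m) ℝ} {y : X → Fin m → ℝ}
    (hM : ∀ a b, DifferentiableAt ℝ (fun x => M x a b) p)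
    (hy : DifferentiableAt ℝ y p) :
    DifferentiableAt ℝ (fun x => M x *ᵥ y x) p := by
  rw [differentiableAt_pi]
  intro a
  have e : (fun x => (M x *ᵥ y x) a) = fun x => ∑ b, M x a b * y x b := by
    funext x; simp [Matrix.mulVec, dotProduct]
  rw [e]
  exact DifferentiableAt.fun_sum fun b _ => (hM a b).mul (diff_coord hy b)

lemma fderiv_mulVec {M : X → Matrix (Fin m) (Fin m) ℝ} {y : X → Fin m → ℝ}
    (hM : ∀ a b, DifferentiableAt ℝ (fun x => M x a b) p)
    (hy : DifferentiableAt ℝ y p) (w : X) :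
    fderiv ℝ (fun x => M x *ᵥ y x) p w
      = (Matrix.of fun a b => fderiv ℝ (fun x => M x a b) p w) *ᵥ y p
        + M p *ᵥ fderiv ℝ y p w := by
  funext a
  have hdm := diff_mulVec hM hy (p := p)
  rw [← fderiv_coord hdm a w]
  have e : (fun x => (M x *ᵥ y x) a) = fun x => ∑ b, M x a b * y x b := by
    funext x; simp [Matrix.mulVec, dotProduct]
  have hd : ∀ b ∈ Finset.univ, DifferentiableAt ℝ (fun x => M x a b * y x b) p :=
    fun b _ => (hM a b).mul (diff_coord hy b)
  rw [e, fderiv_fun_sum hd, ContinuousLinearMap.sum_apply]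
  have hterm : ∀ b : Fin m, (fderiv ℝ (fun x => M x a b * y x b) p) w
      = M p a b * fderiv ℝ y p w b + y p b * fderiv ℝ (fun x => M x a b) p w := by
    intro b
    rw [fderiv_fun_mul (hM a b) (diff_coord hy b)]
    simp [fderiv_coord hy b w]
  simp only [hterm, Pi.add_apply, Matrix.mulVec, dotProduct, Matrix.of_apply,
    Finset.sum_add_distrib]
  rw [add_comm]
  congr 1 <;> exact Finset.sum_congr rfl fun b _ => by ring

lemma fderiv_smul_vec {J : X → ℝ} {y : X → Fin m → ℝ}
    (hJ : DifferentiableAt ℝ J p) (hy : DifferentiableAt ℝ y p) (w : X) :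
    fderiv ℝ (fun x => J x • y x) p w
      = fderiv ℝ J p w • y p + J p • fderiv ℝ y p w := by
  rw [fderiv_fun_smul hJ hy]
  simp [ContinuousLinearMap.smulRight_apply]
  abel

lemma sum_mulVec' {ι : Type*} (s : Finset ι) (M : ι → Matrix (Fin m) (Fin m) ℝ)
    (u : Fin m → ℝ) : (∑ i ∈ s, M i) *ᵥ u = ∑ i ∈ s, M i *ᵥ u := by
  funext a
  simp only [Matrix.mulVec, dotProduct, Matrix.sum_apply, Finset.sum_apply,
    Finset.sum_mul]
  rw [Finset.sum_comm]

lemma dotProduct_sum' {ι : Type*} (s : Finset ι) (u : Fin m → ℝ) (w : ι → Fin m → ℝ) :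
    u ⬝ᵥ (∑ i ∈ s, w i) = ∑ i ∈ s, u ⬝ᵥ w i := by
  simp only [dotProduct, Finset.sum_apply, Finset.mul_sum]
  rw [Finset.sum_comm]

end helpers

lemma divergence_pointwise {m : ℕ}
    (J : (Fin 3 → ℝ) × ℝ → ℝ)
    (v : Fin 3 → ((Fin 3 → ℝ) × ℝ → ℝ))
    (At 𝒜 : Fin 3 → ((Fin 3 → ℝ) × ℝ → Matrix (Fin m) (Fin m) ℝ))
    (q : (Fin 3 → ℝ) × ℝ → (Fin m → ℝ))
    (p : (Fin 3 → ℝ) × ℝ)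
    (hJd : DifferentiableAt ℝ J p)
    (hvd : ∀ i, DifferentiableAt ℝ (v i) p)
    (hAd : ∀ i a b, DifferentiableAt ℝ (fun x => At i x a b) p)
    (hqd : DifferentiableAt ℝ q p)
    (h𝒜 : ∀ i x, 𝒜 i x = At i x - v i x • (1 : Matrix (Fin m) (Fin m) ℝ))
    (hsymm : ∀ i, (𝒜 i p).IsSymm)
    (hGCL : fderiv ℝ J p (0, 1) = ∑ i : Fin 3, fderiv ℝ (v i) p (Pi.single i 1, 0))
    (hPDE : fderiv ℝ (fun x => J x • q x) p (0, 1)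
        + ∑ i : Fin 3, fderiv ℝ (fun x => 𝒜 i x *ᵥ q x) p (Pi.single i 1, 0) = 0)
    (hdiv : ∀ a b, ∑ i : Fin 3, fderiv ℝ (fun x => At i x a b) p (Pi.single i 1, 0) = 0) :
    ∑ k : Fin 3, fderiv ℝ (fun x => q x ⬝ᵥ (𝒜 k x *ᵥ q x)) p (Pi.single k 1, 0)
      + fderiv ℝ (fun x => J x * (q x ⬝ᵥ q x)) p (0, 1) = 0 := by
  -- entry functions of 𝒜 are differentiable
  have e𝒜 : ∀ i a b, (fun x => 𝒜 i x a b)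
      = fun x => At i x a b - v i x * (1 : Matrix (Fin m) (Fin m) ℝ) a b := by
    intro i a b; funext x
    rw [h𝒜]
    simp [Matrix.sub_apply, Matrix.smul_apply, smul_eq_mul]
  have h𝒜d : ∀ i a b, DifferentiableAt ℝ (fun x => 𝒜 i x a b) p := by
    intro i a b
    rw [e𝒜]
    exact (hAd i a b).sub ((hvd i).mul_const _)
  set u := q p with hu
  set Dq := fderiv ℝ q p with hDq
  set eτ : (Fin 3 → ℝ) × ℝ := (0, 1) with heτ
  set ek : Fin 3 → ((Fin 3 → ℝ) × ℝ) := fun k => (Pi.single k 1, 0) with hek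
  set A : Fin 3 → Matrix (Fin m) (Fin m) ℝ := fun k => 𝒜 k p with hA
  set DA : Fin 3 → Matrix (Fin m) (Fin m) ℝ :=
    fun k => Matrix.of fun a b => fderiv ℝ (fun x => 𝒜 k x a b) p (ek k) with hDA
  set dJ := fderiv ℝ J p eτ with hdJ
  -- terms of the goal
  have hterm1 : ∀ k, fderiv ℝ (fun x => q x ⬝ᵥ (𝒜 k x *ᵥ q x)) p (ek k)
      = Dq (ek k) ⬝ᵥ (A k *ᵥ u) + u ⬝ᵥ (DA k *ᵥ u + A k *ᵥ Dq (ek k)) := by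
    intro k
    rw [fderiv_dot hqd (diff_mulVec (h𝒜d k) hqd), fderiv_mulVec (h𝒜d k) hqd]
  have hterm2 : fderiv ℝ (fun x => J x * (q x ⬝ᵥ q x)) p eτ
      = dJ * (u ⬝ᵥ u) + J p * (Dq eτ ⬝ᵥ u + u ⬝ᵥ Dq eτ) := by
    rw [fderiv_fun_mul hJd (diff_dot hqd hqd)]
    simp only [ContinuousLinearMap.add_apply, ContinuousLinearMap.smul_apply, smul_eq_mul]
    rw [fderiv_dot hqd hqd]
    ring
  -- dotted PDE
  have hQ : u ⬝ᵥ fderiv ℝ (fun x => J x • q x) p eτ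
      + ∑ k : Fin 3, u ⬝ᵥ fderiv ℝ (fun x => 𝒜 k x *ᵥ q x) p (ek k) = 0 := by
    have h0 := congrArg (fun y => u ⬝ᵥ y) hPDE
    simpa [dotProduct_add, dotProduct_sum', hek] using h0
  have hsmul : u ⬝ᵥ fderiv ℝ (fun x => J x • q x) p eτ
      = dJ * (u ⬝ᵥ u) + J p * (u ⬝ᵥ Dq eτ) := by
    rw [fderiv_smul_vec hJd hqd]
    simp [dotProduct_add, dotProduct_smul, smul_eq_mul, hdJ, hu, hDq]
  have hterm3 : ∀ k, u ⬝ᵥ fderiv ℝ (fun x => 𝒜 k x *ᵥ q x) p (ek k)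
      = u ⬝ᵥ (DA k *ᵥ u) + u ⬝ᵥ (A k *ᵥ Dq (ek k)) := by
    intro k
    rw [fderiv_mulVec (h𝒜d k) hqd, dotProduct_add]
  -- the sum of the DA k is a multiple of the identity
  have hDAsum : ∑ k : Fin 3, DA k = (-dJ) • (1 : Matrix (Fin m) (Fin m) ℝ) := by
    ext a b
    have hent : ∀ k, DA k a b
        = fderiv ℝ (fun x => At k x a b) p (ek k)
          - (1 : Matrix (Fin m) (Fin m) ℝ) a b * fderiv ℝ (v k) p (ek k) := by
      intro k
      show fderiv ℝ (fun x => 𝒜 k x a b) p (ek k) = _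
      rw [e𝒜]
      rw [fderiv_fun_sub (hAd k a b) ((hvd k).mul_const _), fderiv_mul_const (hvd k)]
      simp [smul_eq_mul]
    simp only [Finset.sum_apply, Matrix.sum_apply, hent, Finset.sum_sub_distrib,
      Matrix.smul_apply, smul_eq_mul]
    rw [hdiv a b, zero_sub, hGCL, neg_mul, Finset.sum_mul]
    simp only [hek]
    exact neg_inj.2 (Finset.sum_congr rfl fun i _ => mul_comm _ _)
  -- symmetry
  have hsym : ∀ k (w : Fin m → ℝ), w ⬝ᵥ (A k *ᵥ u) = u ⬝ᵥ (A k *ᵥ w) := by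
    intro k w
    rw [dotProduct_mulVec, ← mulVec_transpose, (hsymm k : (𝒜 k p)ᵀ = 𝒜 k p), dotProduct_comm]
  -- scalar abbreviations
  have hsumS : ∑ k : Fin 3, u ⬝ᵥ (DA k *ᵥ u) = -(dJ * (u ⬝ᵥ u)) := by
    rw [← dotProduct_sum', ← sum_mulVec', hDAsum, smul_mulVec, one_mulVec,
      dotProduct_smul]
    simp [smul_eq_mul]
  have hsumT : ∑ k : Fin 3, u ⬝ᵥ (A k *ᵥ Dq (ek k)) = -(J p * (u ⬝ᵥ Dq eτ)) := by
    have h1 : ∑ k : Fin 3, (u ⬝ᵥ (DA k *ᵥ u) + u ⬝ᵥ (A k *ᵥ Dq (ek k))) =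
        -(dJ * (u ⬝ᵥ u)) - J p * (u ⬝ᵥ Dq eτ) := by
      have := hQ
      rw [hsmul] at this
      simp only [hterm3] at this
      linarith
    rw [Finset.sum_add_distrib, hsumS] at h1
    linarith
  -- assemble
  show ∑ k : Fin 3, fderiv ℝ (fun x => q x ⬝ᵥ (𝒜 k x *ᵥ q x)) p (ek k) + _ = 0
  simp only [hterm1, hterm2]
  have hgoal : ∀ k, Dq (ek k) ⬝ᵥ (A k *ᵥ u) + u ⬝ᵥ (DA k *ᵥ u + A k *ᵥ Dq (ek k))
      = u ⬝ᵥ (A k *ᵥ Dq (ek k)) + (u ⬝ᵥ (DA k *ᵥ u) + u ⬝ᵥ (A k *ᵥ Dq (ek k))) := by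
    intro k
    rw [hsym k, dotProduct_add]
  simp only [hgoal]
  rw [Finset.sum_add_distrib, Finset.sum_add_distrib, hsumT, hsumS]
  have hcomm : Dq eτ ⬝ᵥ u = u ⬝ᵥ Dq eτ := dotProduct_comm _ _
  rw [hcomm]
  ring

noncomputable def eL' : ((Fin 3 → ℝ) × ℝ) ≃L[ℝ] (Fin 4 → ℝ) :=
  LinearEquiv.toContinuousLinearEquiv
  { toFun := fun p => (Fin.last 3).insertNth p.2 p.1
    invFun := fun x => (fun j => x ((Fin.last 3).succAbove j), x (Fin.last 3))
    map_add' := by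
      intro p q
      simp only [Fin.insertNth_last]
      ext i
      refine Fin.lastCases ?_ (fun j => ?_) i <;> simp [-Fin.reduceLast]
    map_smul' := by
      intro c p
      simp only [Fin.insertNth_last, RingHom.id_apply]
      ext i
      refine Fin.lastCases ?_ (fun j => ?_) i <;> simp [-Fin.reduceLast]
    left_inv := by
      intro p
      simp [Fin.succAbove_last]
    right_inv := by
      intro x
      simp only [Fin.insertNth_last, Fin.succAbove_last]
      ext i
      refine Fin.lastCases ?_ (fun j => ?_) i <;> simp [-Fin.reduceLast] }

lemma eL'_apply (p : (Fin 3 → ℝ) × ℝ) : eL' p = (Fin.last 3).insertNth p.2 p.1 := rfl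
lemma eL'_symm_apply (x : Fin 4 → ℝ) :
    eL'.symm x = (fun j => x ((Fin.last 3).succAbove j), x (Fin.last 3)) := rfl

lemma eL'_ord (x y : (Fin 3 → ℝ) × ℝ) : eL' x ≤ eL' y ↔ x ≤ y := by
  rw [eL'_apply, eL'_apply, Pi.le_def, Prod.le_def]
  constructor
  · intro h
    refine ⟨fun j => ?_, ?_⟩
    · simpa using h ((Fin.last 3).succAbove j)
    · simpa using h (Fin.last 3)
  · rintro ⟨h1, h2⟩ i
    refine Fin.lastCases ?_ (fun j => ?_) i
    · simpa using h2
    · have := h1 j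
      simpa [Fin.succAbove_last, -Fin.reduceLast] using this

lemma eL'_vol : MeasurePreserving eL' volume volume := by
  have h1 := (volume_preserving_piFinSuccAbove (fun _ : Fin 4 => ℝ) (Fin.last 3)).symm
  have h2 : MeasurePreserving (Prod.swap : ((Fin 3 → ℝ) × ℝ) → ℝ × (Fin 3 → ℝ)) volume volume := by
    rw [Measure.volume_eq_prod, Measure.volume_eq_prod]
    exact Measure.measurePreserving_swap
  have h3 := h1.comp h2
  convert h3 using 1
  · rfl
  · rfl

/-- **Energy non-growth for divergence-free coefficient matrices.** In the
well-posedness setting on `E = [−1,1]³ × [0,T]` (symmetric `Ã i`,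
`𝒜 i = Ã i − v i • Id`, `J > 0`, GCL, conservative form of the mapped system,
nonnegative outward boundary flux), if moreover `Σ i ∂Ã i/∂ξ i ≡ 0` on
`E × [0,T]` (in particular if each `Ã i` is constant in `ξ`), then
`∫_E J(·,T)‖q(·,T)‖² ≤ ∫_E J(·,0)‖q(·,0)‖²`. -/
theorem energy_non_growth_of_divergence_free
    (m : ℕ) (hm : 1 ≤ m) (T : ℝ) (hT : 0 < T)
    (E : Set (Fin 3 → ℝ)) (hE : E = Set.Icc (fun _ => (-1 : ℝ)) (fun _ => (1 : ℝ)))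
    (J : (Fin 3 → ℝ) × ℝ → ℝ) (hJ : ContDiff ℝ 1 J)
    (v : Fin 3 → ((Fin 3 → ℝ) × ℝ → ℝ)) (hv : ∀ i, ContDiff ℝ 1 (v i))
    (At : Fin 3 → ((Fin 3 → ℝ) × ℝ → Matrix (Fin m) (Fin m) ℝ))
    (hAt : ∀ i a b, ContDiff ℝ 1 (fun x => At i x a b))
    (hAtsymm : ∀ i, ∀ p ∈ E ×ˢ Set.Icc (0 : ℝ) T, (At i p).IsSymm)
    (q : (Fin 3 → ℝ) × ℝ → (Fin m → ℝ)) (hq : ContDiff ℝ 1 q)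
    (𝒜 : Fin 3 → ((Fin 3 → ℝ) × ℝ → Matrix (Fin m) (Fin m) ℝ))
    (h𝒜 : ∀ i x, 𝒜 i x = At i x - v i x • (1 : Matrix (Fin m) (Fin m) ℝ))
    (hGCL : ∀ p ∈ E ×ˢ Set.Icc (0 : ℝ) T,
      fderiv ℝ J p (0, 1) = ∑ i : Fin 3, fderiv ℝ (v i) p (Pi.single i 1, 0))
    (hPDE : ∀ p ∈ E ×ˢ Set.Icc (0 : ℝ) T,
      fderiv ℝ (fun x => J x • q x) p (0, 1)
        + ∑ i : Fin 3, fderiv ℝ (fun x => 𝒜 i x *ᵥ q x) p (Pi.single i 1, 0) = 0)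
    (hJpos : ∀ p ∈ E ×ˢ Set.Icc (0 : ℝ) T, 0 < J p)
    -- vanishing divergence of the contravariant coefficient matrices
    (hdivfree : ∀ p ∈ E ×ˢ Set.Icc (0 : ℝ) T, ∀ a b,
      ∑ i : Fin 3, fderiv ℝ (fun x => At i x a b) p (Pi.single i 1, 0) = 0)
    -- nonnegative outward boundary flux
    (hbc : ∀ i : Fin 3, ∀ τ ∈ Set.Icc (0 : ℝ) T, ∀ ξ ∈ E,
      (ξ i = 1 → 0 ≤ q (ξ, τ) ⬝ᵥ (𝒜 i (ξ, τ) *ᵥ q (ξ, τ)))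
        ∧ (ξ i = -1 → q (ξ, τ) ⬝ᵥ (𝒜 i (ξ, τ) *ᵥ q (ξ, τ)) ≤ 0)) :
    ∫ ξ in E, J (ξ, T) * (q (ξ, T) ⬝ᵥ q (ξ, T))
      ≤ ∫ ξ in E, J (ξ, 0) * (q (ξ, 0) ⬝ᵥ q (ξ, 0)) := by
  classical
  -- the corners of the space-time box
  set a : (Fin 3 → ℝ) × ℝ := (fun _ => (-1 : ℝ), 0) with ha
  set b : (Fin 3 → ℝ) × ℝ := (fun _ => (1 : ℝ), T) with hb
  have hab : a ≤ b := by
    constructor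
    · intro j; norm_num
    · exact hT.le
  have hIcc : Set.Icc a b = E ×ˢ Set.Icc (0 : ℝ) T := by
    rw [Set.Icc_prod_eq, hE]
  -- smoothness of the flux components
  have hqa : ∀ a', ContDiff ℝ 1 (fun x => q x a') := fun a' => (contDiff_pi.mp hq) a'
  have hAe : ∀ k a' b', ContDiff ℝ 1 (fun x => 𝒜 k x a' b') := by
    intro k a' b'
    have e : (fun x => 𝒜 k x a' b')
        = fun x => At k x a' b' - v k x * (1 : Matrix (Fin m) (Fin m) ℝ) a' b' := by
      funext x; rw [h𝒜]; simp [Matrix.sub_apply, Matrix.smul_apply, smul_eq_mul]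
    rw [e]
    exact (hAt k a' b').sub ((hv k).mul contDiff_const)
  have hgk : ∀ k : Fin 3, ContDiff ℝ 1 (fun x => q x ⬝ᵥ (𝒜 k x *ᵥ q x)) := by
    intro k
    have e : (fun x => q x ⬝ᵥ (𝒜 k x *ᵥ q x))
        = fun x => ∑ a', q x a' * ∑ b', 𝒜 k x a' b' * q x b' := by
      funext x; simp [dotProduct, Matrix.mulVec]
    rw [e]
    exact ContDiff.sum fun a' _ =>
      (hqa a').mul (ContDiff.sum fun b' _ => (hAe k a' b').mul (hqa b'))
  have hgτ : ContDiff ℝ 1 (fun x => J x * (q x ⬝ᵥ q x)) := by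
    have e : (fun x : (Fin 3 → ℝ) × ℝ => q x ⬝ᵥ q x) = fun x => ∑ a', q x a' * q x a' := by
      funext x; simp [dotProduct]
    exact hJ.mul (by rw [e]; exact ContDiff.sum fun a' _ => (hqa a').mul (hqa a'))
  -- the vector field
  set f : Fin 4 → ((Fin 3 → ℝ) × ℝ) → ℝ :=
    fun i => Fin.lastCases (fun x => J x * (q x ⬝ᵥ q x))
      (fun k x => q x ⬝ᵥ (𝒜 k x *ᵥ q x)) i with hf
  have hfc : ∀ i, ContDiff ℝ 1 (f i) := by
    intro i
    refine Fin.lastCases ?_ (fun k => ?_) i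
    · simpa [hf, -Fin.reduceLast] using hgτ
    · simpa [hf] using hgk k
  set f' : Fin 4 → ((Fin 3 → ℝ) × ℝ) → ((Fin 3 → ℝ) × ℝ) →L[ℝ] ℝ :=
    fun i x => if x ∈ Set.Icc a b then fderiv ℝ (f i) x else 0 with hf'
  -- images of basis vectors
  have hsingle_cast : ∀ k : Fin 3,
      eL'.symm (Pi.single (Fin.castSucc k) 1) = ((Pi.single k 1 : Fin 3 → ℝ), 0) := by
    intro k
    rw [eL'_symm_apply]
    refine Prod.ext ?_ ?_
    · funext j
      simp [Fin.succAbove_last, Pi.single_apply, Fin.castSucc_inj, -Fin.reduceLast]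
    · simp [Pi.single_apply, (Fin.castSucc_lt_last k).ne, -Fin.reduceLast]
  have hsingle_last : eL'.symm (Pi.single (Fin.last 3) 1) = ((0 : Fin 3 → ℝ), 1) := by
    rw [eL'_symm_apply]
    refine Prod.ext ?_ ?_
    · funext j
      simp [Fin.succAbove_last, Pi.single_apply, (Fin.castSucc_lt_last j).ne]
    · simp
  -- pointwise divergence identity
  have hkey : ∀ x ∈ Set.Icc a b,
      ∑ i : Fin 4, fderiv ℝ (f i) x (eL'.symm (Pi.single i 1)) = 0 := by
    intro x hx
    have hx' : x ∈ E ×ˢ Set.Icc (0 : ℝ) T := by rw [← hIcc]; exact hx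
    rw [Fin.sum_univ_castSucc]
    simp only [hf, Fin.lastCases_castSucc, Fin.lastCases_last, hsingle_cast, hsingle_last, -Fin.reduceLast]
    have hsymm𝒜 : ∀ i, (𝒜 i x).IsSymm := by
      intro i
      show (𝒜 i x)ᵀ = 𝒜 i x
      rw [h𝒜, Matrix.transpose_sub, Matrix.transpose_smul, Matrix.transpose_one,
        (hAtsymm i x hx' : (At i x)ᵀ = At i x)]
    exact divergence_pointwise J v At 𝒜 q x
      (hJ.differentiable one_ne_zero x) (fun i => (hv i).differentiable one_ne_zero x)
      (fun i a' b' => (hAt i a' b').differentiable one_ne_zero x)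
      (hq.differentiable one_ne_zero x) h𝒜 hsymm𝒜 (hGCL x hx') (hPDE x hx') (hdivfree x hx')
  -- apply the divergence theorem
  have hdiv_thm := integral_divergence_of_hasFDerivAt_off_countable_of_equiv
    eL' eL'_ord eL'_vol f f' ∅ Set.countable_empty a b hab
    (fun i => ((hfc i).continuous).continuousOn)
    (by
      intro x hx i
      have hxi : x ∈ Set.Icc a b := interior_subset hx.1
      rw [hf']
      simp only [if_pos hxi]
      exact ((hfc i).differentiable one_ne_zero x).hasFDerivAt)
    (fun _ => (0 : ℝ))
    (by
      intro x
      by_cases hx : x ∈ Set.Icc a b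
      · rw [hf']
        simp only [if_pos hx]
        exact (hkey x hx).symm
      · have h0 : ∀ i : Fin 4, f' i x = 0 := fun i => if_neg hx
        simp [h0])
    (integrableOn_zero)
  -- the divergence theorem conclusion, with vanishing left-hand side
  have hzero : (0:ℝ) = ∑ i : Fin 4,
      ((∫ x in Set.Icc (⇑eL' a ∘ i.succAbove) (⇑eL' b ∘ i.succAbove),
          f i (eL'.symm (i.insertNth (eL' b i) x))) -
        ∫ x in Set.Icc (⇑eL' a ∘ i.succAbove) (⇑eL' b ∘ i.succAbove),
          f i (eL'.symm (i.insertNth (eL' a i) x))) := by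
    simpa using hdiv_thm
  -- corner coordinates
  have hsA : ∀ k : Fin 3, (Fin.last 3).succAbove k = Fin.castSucc k := by
    intro k; simp [Fin.succAbove_last, -Fin.reduceLast]
  have heLa_cast : ∀ k : Fin 3, eL' a (Fin.castSucc k) = -1 := by
    intro k
    rw [eL'_apply, ← hsA k, Fin.insertNth_apply_succAbove]
  have heLb_cast : ∀ k : Fin 3, eL' b (Fin.castSucc k) = 1 := by
    intro k
    rw [eL'_apply, ← hsA k, Fin.insertNth_apply_succAbove]
  have heLa_last : eL' a (Fin.last 3) = 0 := by
    rw [eL'_apply, Fin.insertNth_apply_same]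
  have heLb_last : eL' b (Fin.last 3) = T := by
    rw [eL'_apply, Fin.insertNth_apply_same]
  have heLab : eL' a ≤ eL' b := (eL'_ord a b).2 hab
  -- membership of face points in the space-time box
  have hmem : ∀ (i : Fin 4) (c : ℝ), c ∈ Set.Icc (eL' a i) (eL' b i) →
      ∀ x ∈ Set.Icc (⇑eL' a ∘ i.succAbove) (⇑eL' b ∘ i.succAbove),
      eL'.symm (i.insertNth c x) ∈ E ×ˢ Set.Icc (0:ℝ) T := by
    intro i c hc x hx
    rw [← hIcc]
    have h4 : i.insertNth c x ∈ Set.Icc (eL' a) (eL' b) :=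
      Fin.insertNth_mem_Icc.2 ⟨hc, hx⟩
    rw [Set.mem_Icc] at h4 ⊢
    constructor
    · rw [← eL'_ord, eL'.apply_symm_apply]; exact h4.1
    · rw [← eL'_ord, eL'.apply_symm_apply]; exact h4.2
  -- spatial faces have nonnegative flux difference
  have hface : ∀ k : Fin 3,
      0 ≤ (∫ x in Set.Icc (⇑eL' a ∘ (Fin.castSucc k).succAbove)
              (⇑eL' b ∘ (Fin.castSucc k).succAbove),
            f (Fin.castSucc k)
              (eL'.symm ((Fin.castSucc k).insertNth (eL' b (Fin.castSucc k)) x))) -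
          ∫ x in Set.Icc (⇑eL' a ∘ (Fin.castSucc k).succAbove)
              (⇑eL' b ∘ (Fin.castSucc k).succAbove),
            f (Fin.castSucc k)
              (eL'.symm ((Fin.castSucc k).insertNth (eL' a (Fin.castSucc k)) x)) := by
    intro k
    have hfront : 0 ≤ ∫ x in Set.Icc (⇑eL' a ∘ (Fin.castSucc k).succAbove)
        (⇑eL' b ∘ (Fin.castSucc k).succAbove),
        f (Fin.castSucc k)
          (eL'.symm ((Fin.castSucc k).insertNth (eL' b (Fin.castSucc k)) x)) := by
      refine setIntegral_nonneg measurableSet_Icc ?_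
      intro x hx
      set y : Fin 4 → ℝ := (Fin.castSucc k).insertNth (eL' b (Fin.castSucc k)) x with hy
      set p' := eL'.symm y with hp'
      have hmem' : p' ∈ E ×ˢ Set.Icc (0:ℝ) T :=
        hmem _ _ (Set.right_mem_Icc.2 (heLab _)) x hx
      have hξ : p'.1 ∈ E := hmem'.1
      have hτ : p'.2 ∈ Set.Icc (0:ℝ) T := hmem'.2
      have hξk : p'.1 k = 1 := by
        have h1 : p'.1 k = y ((Fin.last 3).succAbove k) := by
          rw [hp', eL'_symm_apply]
        rw [hsA k, hy, Fin.insertNth_apply_same, heLb_cast] at h1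
        exact h1
      have := (hbc k p'.2 hτ p'.1 hξ).1 hξk
      simpa [hf, Fin.lastCases_castSucc] using this
    have hback : (∫ x in Set.Icc (⇑eL' a ∘ (Fin.castSucc k).succAbove)
        (⇑eL' b ∘ (Fin.castSucc k).succAbove),
        f (Fin.castSucc k)
          (eL'.symm ((Fin.castSucc k).insertNth (eL' a (Fin.castSucc k)) x))) ≤ 0 := by
      refine setIntegral_nonpos measurableSet_Icc ?_
      intro x hx
      set y : Fin 4 → ℝ := (Fin.castSucc k).insertNth (eL' a (Fin.castSucc k)) x with hy
      set p' := eL'.symm y with hp'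
      have hmem' : p' ∈ E ×ˢ Set.Icc (0:ℝ) T :=
        hmem _ _ (Set.left_mem_Icc.2 (heLab _)) x hx
      have hξ : p'.1 ∈ E := hmem'.1
      have hτ : p'.2 ∈ Set.Icc (0:ℝ) T := hmem'.2
      have hξk : p'.1 k = -1 := by
        have h1 : p'.1 k = y ((Fin.last 3).succAbove k) := by
          rw [hp', eL'_symm_apply]
        rw [hsA k, hy, Fin.insertNth_apply_same, heLa_cast] at h1
        exact h1
      have := (hbc k p'.2 hτ p'.1 hξ).2 hξk
      simpa [hf, Fin.lastCases_castSucc] using this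
    linarith
  -- the time face
  have hfaceset : Set.Icc (⇑eL' a ∘ (Fin.last 3).succAbove) (⇑eL' b ∘ (Fin.last 3).succAbove)
      = E := by
    have hA1 : ⇑eL' a ∘ (Fin.last 3).succAbove = (fun _ : Fin 3 => (-1:ℝ)) := by
      funext j
      show eL' a ((Fin.last 3).succAbove j) = -1
      rw [eL'_apply, Fin.insertNth_apply_succAbove]
    have hB1 : ⇑eL' b ∘ (Fin.last 3).succAbove = (fun _ : Fin 3 => (1:ℝ)) := by
      funext j
      show eL' b ((Fin.last 3).succAbove j) = 1
      rw [eL'_apply, Fin.insertNth_apply_succAbove]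
    rw [hA1, hB1, hE]
  have hpt : ∀ (c : ℝ) (x : Fin 3 → ℝ),
      eL'.symm ((Fin.last 3).insertNth c x) = (x, c) := by
    intro c x
    rw [eL'_symm_apply]
    refine Prod.ext ?_ ?_
    · funext j
      simp [Fin.insertNth_apply_succAbove]
    · rw [Fin.insertNth_apply_same]
  have hT_front : (fun x : Fin 3 → ℝ =>
      f (Fin.last 3) (eL'.symm ((Fin.last 3).insertNth (eL' b (Fin.last 3)) x)))
      = fun x => J (x, T) * (q (x, T) ⬝ᵥ q (x, T)) := by
    funext x
    rw [heLb_last, hpt]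
    simp [hf, Fin.lastCases_last, -Fin.reduceLast]
  have hT_back : (fun x : Fin 3 → ℝ =>
      f (Fin.last 3) (eL'.symm ((Fin.last 3).insertNth (eL' a (Fin.last 3)) x)))
      = fun x => J (x, 0) * (q (x, 0) ⬝ᵥ q (x, 0)) := by
    funext x
    rw [heLa_last, hpt]
    simp [hf, Fin.lastCases_last, -Fin.reduceLast]
  rw [Fin.sum_univ_castSucc, hfaceset, hT_front, hT_back] at hzero
  have hS : 0 ≤ ∑ k : Fin 3,
      ((∫ x in Set.Icc (⇑eL' a ∘ (Fin.castSucc k).succAbove)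
              (⇑eL' b ∘ (Fin.castSucc k).succAbove),
            f (Fin.castSucc k)
              (eL'.symm ((Fin.castSucc k).insertNth (eL' b (Fin.castSucc k)) x))) -
          ∫ x in Set.Icc (⇑eL' a ∘ (Fin.castSucc k).succAbove)
              (⇑eL' b ∘ (Fin.castSucc k).succAbove),
            f (Fin.castSucc k)
              (eL'.symm ((Fin.castSucc k).insertNth (eL' a (Fin.castSucc k)) x))) :=
    Finset.sum_nonneg fun k _ => hface k
  linarith
end

section
/- Let N ≥ 1 and let x₀,…,x_N ∈ [−1,1] with weights w₀,…,w_N ∈ ℝ be a quadrature rule exact for polynomials of degree at most 2N−1. Then the summation-by-parts property holds: for all real polynomials f, g of degree at most N, Σ_{j=0}^N w_j f′(x_j) g(x_j) = f(1)g(1) − f(−1)g(−1) − Σ_{j=0}^N w_j f(x_j) g′(x_j). -/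
open Polynomial

/-- **Discrete summation-by-parts for a quadrature rule exact to degree `2N−1`.**
For nodes `x₀,…,x_N ∈ [−1,1]` and weights `w₀,…,w_N` with
`Σ_j w_j p(x_j) = ∫_{−1}^1 p` for every polynomial `p` of degree at most `2N−1`,
and any polynomials `f, g` of degree at most `N`,
`Σ_j w_j f′(x_j) g(x_j) = f(1)g(1) − f(−1)g(−1) − Σ_j w_j f(x_j) g′(x_j)`. -/
theorem quadrature_summation_by_parts
    (N : ℕ) (hN : 1 ≤ N)
    (x : Fin (N + 1) → ℝ) (hx : ∀ j, x j ∈ Set.Icc (-1 : ℝ) 1)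
    (w : Fin (N + 1) → ℝ)
    (hexact : ∀ p : Polynomial ℝ, p.natDegree ≤ 2 * N - 1 →
      ∑ j, w j * p.eval (x j) = ∫ t in (-1 : ℝ)..1, p.eval t)
    (f g : Polynomial ℝ) (hf : f.natDegree ≤ N) (hg : g.natDegree ≤ N) :
    ∑ j, w j * (Polynomial.derivative f).eval (x j) * g.eval (x j)
      = f.eval 1 * g.eval 1 - f.eval (-1) * g.eval (-1)
        - ∑ j, w j * f.eval (x j) * (Polynomial.derivative g).eval (x j) := by
  have hdeg : (Polynomial.derivative (f * g)).natDegree ≤ 2 * N - 1 := by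
    have h1 : (f * g).natDegree ≤ 2 * N := by
      calc (f * g).natDegree ≤ f.natDegree + g.natDegree := Polynomial.natDegree_mul_le
        _ ≤ N + N := Nat.add_le_add hf hg
        _ = 2 * N := by ring
    calc (Polynomial.derivative (f * g)).natDegree ≤ (f * g).natDegree - 1 :=
          Polynomial.natDegree_derivative_le _
      _ ≤ 2 * N - 1 := Nat.sub_le_sub_right h1 1
  have hkey := hexact (Polynomial.derivative (f * g)) hdeg
  have hint : (∫ t in (-1 : ℝ)..1, (Polynomial.derivative (f * g)).eval t)
      = f.eval 1 * g.eval 1 - f.eval (-1) * g.eval (-1) := by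
    rw [intervalIntegral.integral_eq_sub_of_hasDerivAt
      (fun t _ => (f * g).hasDerivAt t)
      ((Polynomial.continuous _).intervalIntegrable _ _)]
    simp [Polynomial.eval_mul]
  rw [hint] at hkey
  have hsum : ∑ j, w j * (Polynomial.derivative (f * g)).eval (x j)
      = (∑ j, w j * (Polynomial.derivative f).eval (x j) * g.eval (x j))
        + ∑ j, w j * f.eval (x j) * (Polynomial.derivative g).eval (x j) := by
    rw [← Finset.sum_add_distrib]
    refine Finset.sum_congr rfl fun j _ => ?_
    simp [Polynomial.derivative_mul, Polynomial.eval_add, Polynomial.eval_mul]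
    ring
  rw [hsum] at hkey
  linarith
end

section
/- Let N ≥ 1 and let −1 = x₀ < x₁ < … < x_N = 1 be distinct nodes with weights w₀,…,w_N forming a quadrature rule exact for polynomials of degree at most 2N−1. Let ℓ_j be the Lagrange basis polynomials for these nodes and define the differentiation matrix D with entries D_{ij} = ℓ_j′(x_i). Then for all 0 ≤ i, j ≤ N, w_i D_{ij} + w_j D_{ji} = δ_{iN}δ_{jN} − δ_{i0}δ_{j0}; equivalently, in matrix form W D + Dᵀ W = diag(−1, 0, …, 0, 1), where W = diag(w₀,…,w_N). -/
open Polynomial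

theorem sbp_if_mul (P Q : Prop) [Decidable P] [Decidable Q] :
    (if P then (1:ℝ) else 0) * (if Q then 1 else 0) = if P ∧ Q then 1 else 0 := by
  split_ifs with h1 h2 h3 <;> simp_all

/-- **SBP property of the differentiation matrix.** For distinct nodes
`−1 = x₀ < x₁ < … < x_N = 1` with weights forming a quadrature rule exact for
polynomials of degree at most `2N−1`, the differentiation matrix
`D_{ij} = ℓ_j′(x_i)` (with `ℓ_j` the Lagrange basis polynomials) satisfies
`w_i D_{ij} + w_j D_{ji} = δ_{iN} δ_{jN} − δ_{i0} δ_{j0}`, i.e. in matrix form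
`W D + Dᵀ W = diag(−1, 0, …, 0, 1)`. -/
theorem differentiation_matrix_sbp
    (N : ℕ) (hN : 1 ≤ N)
    (x : Fin (N + 1) → ℝ) (hmono : StrictMono x)
    (hx0 : x 0 = -1) (hxN : x (Fin.last N) = 1)
    (w : Fin (N + 1) → ℝ)
    (hexact : ∀ p : Polynomial ℝ, p.natDegree ≤ 2 * N - 1 →
      ∑ j, w j * p.eval (x j) = ∫ t in (-1 : ℝ)..1, p.eval t)
    (D : Fin (N + 1) → Fin (N + 1) → ℝ)
    (hD : ∀ i j, D i j
      = (Polynomial.derivative (Lagrange.basis Finset.univ x j)).eval (x i)) :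
    ∀ i j, w i * D i j + w j * D j i
      = (if i = Fin.last N ∧ j = Fin.last N then (1 : ℝ) else 0)
        - (if i = 0 ∧ j = 0 then (1 : ℝ) else 0) := by
  intro i j
  have hinj : Set.InjOn x ↑(Finset.univ : Finset (Fin (N + 1))) :=
    fun a _ b _ h => hmono.injective h
  set ℓi := Lagrange.basis Finset.univ x i with hℓi
  set ℓj := Lagrange.basis Finset.univ x j with hℓj
  have hdegi : ℓi.natDegree = N := by
    rw [hℓi, Lagrange.natDegree_basis hinj (Finset.mem_univ i)]
    simp
  have hdegj : ℓj.natDegree = N := by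
    rw [hℓj, Lagrange.natDegree_basis hinj (Finset.mem_univ j)]
    simp
  have hdeg : (derivative (ℓi * ℓj)).natDegree ≤ 2 * N - 1 := by
    have h1 : (ℓi * ℓj).natDegree ≤ 2 * N := by
      calc (ℓi * ℓj).natDegree ≤ ℓi.natDegree + ℓj.natDegree := natDegree_mul_le
      _ = 2 * N := by rw [hdegi, hdegj]; ring
    calc (derivative (ℓi * ℓj)).natDegree ≤ (ℓi * ℓj).natDegree - 1 :=
        natDegree_derivative_le _
      _ ≤ 2 * N - 1 := by omega
  have key := hexact (derivative (ℓi * ℓj)) hdeg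
  -- Evaluate the left side of key
  have evals : ∀ a b : Fin (N + 1),
      (Lagrange.basis Finset.univ x a).eval (x b) = if a = b then 1 else 0 := by
    intro a b
    by_cases h : a = b
    · subst h; simp [Lagrange.eval_basis_self hinj (Finset.mem_univ a)]
    · simp [h, Lagrange.eval_basis_of_ne h (Finset.mem_univ b)]
  have hsum : ∑ k, w k * (derivative (ℓi * ℓj)).eval (x k)
      = w j * D j i + w i * D i j := by
    have : ∀ k, w k * (derivative (ℓi * ℓj)).eval (x k)
        = (if j = k then w k * (derivative ℓi).eval (x k) else 0)
          + (if i = k then w k * (derivative ℓj).eval (x k) else 0) := by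
      intro k
      rw [derivative_mul, eval_add, eval_mul, eval_mul, hℓi, hℓj, evals, evals]
      by_cases h1 : i = k <;> by_cases h2 : j = k <;> simp [h1, h2] <;> ring
    rw [Finset.sum_congr rfl (fun k _ => this k), Finset.sum_add_distrib,
      Finset.sum_ite_eq, Finset.sum_ite_eq]
    simp only [Finset.mem_univ, if_true, hD, hℓi, hℓj]
  -- Evaluate the integral via FTC
  have hint : (∫ t in (-1 : ℝ)..1, (derivative (ℓi * ℓj)).eval t)
      = (ℓi * ℓj).eval 1 - (ℓi * ℓj).eval (-1) := by
    exact intervalIntegral.integral_deriv_eq_sub' (fun t => (ℓi * ℓj).eval t)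
      (funext fun t => Polynomial.deriv (ℓi * ℓj))
      (fun t _ => (ℓi * ℓj).differentiableAt)
      ((derivative (ℓi * ℓj)).continuous.continuousOn)
  rw [hsum, hint] at key
  have h1 : (ℓi * ℓj).eval 1
      = (if i = Fin.last N then 1 else 0) * (if j = Fin.last N then 1 else 0) := by
    conv_lhs => rw [← hxN]
    rw [eval_mul, hℓi, hℓj, evals, evals]
  have h0 : (ℓi * ℓj).eval (-1)
      = (if i = 0 then 1 else 0) * (if j = 0 then 1 else 0) := by
    conv_lhs => rw [← hx0]
    rw [eval_mul, hℓi, hℓj, evals, evals]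
  rw [h1, h0] at key
  rw [add_comm] at key
  rw [key]
  rw [sbp_if_mul, sbp_if_mul]
end

section
/- Let N ≥ 1 and let x₀,…,x_N ∈ [−1,1] with weights w₀,…,w_N be a quadrature rule exact for polynomials of degree at most 2N−1. Let F¹, F², F³ and φ be real polynomials in three variables (ξ¹,ξ²,ξ³), each of degree at most N in each variable separately. Then the three-dimensional summation-by-parts identity on the tensor-product grid holds: Σ_{j,k,l=0}^N w_j w_k w_l [ (∂₁F¹ + ∂₂F² + ∂₃F³) φ ](x_j,x_k,x_l) = Σ_{k,l=0}^N w_k w_l [ (F¹φ)(1,x_k,x_l) − (F¹φ)(−1,x_k,x_l) ] + Σ_{j,l=0}^N w_j w_l [ (F²φ)(x_j,1,x_l) − (F²φ)(x_j,−1,x_l) ] + Σ_{j,k=0}^N w_j w_k [ (F³φ)(x_j,x_k,1) − (F³φ)(x_j,x_k,−1) ] − Σ_{j,k,l=0}^N w_j w_k w_l [ F¹∂₁φ + F²∂₂φ + F³∂₃φ ](x_j,x_k,x_l). -/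
open MvPolynomial Polynomial

-- substitution map
noncomputable def sbst (c : Fin 3 → ℝ) (i : Fin 3) : MvPolynomial (Fin 3) ℝ →ₐ[ℝ] Polynomial ℝ :=
  MvPolynomial.aeval (fun d => if d = i then Polynomial.X else Polynomial.C (c d))

lemma sbst_eval (c : Fin 3 → ℝ) (i : Fin 3) (p : MvPolynomial (Fin 3) ℝ) (t : ℝ) :
    Polynomial.eval t (sbst c i p) = MvPolynomial.eval (Function.update c i t) p := by
  induction p using MvPolynomial.induction_on with
  | C a => simp [sbst]
  | add p q hp hq => simp [map_add, hp, hq]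
  | mul_X p d hp =>
      simp only [map_mul, Polynomial.eval_mul, hp, sbst, MvPolynomial.aeval_X, MvPolynomial.eval_mul, MvPolynomial.eval_X]
      congr 1
      by_cases h : d = i <;> simp [h, Function.update]

lemma sbst_deriv (c : Fin 3 → ℝ) (i : Fin 3) (p : MvPolynomial (Fin 3) ℝ) :
    (sbst c i p).derivative = sbst c i (MvPolynomial.pderiv i p) := by
  induction p using MvPolynomial.induction_on with
  | C a => simp [sbst]
  | add p q hp hq => simp [map_add, hp, hq]
  | mul_X p d hp =>
      simp only [map_mul, Polynomial.derivative_mul, hp, pderiv_mul, pderiv_X, map_add]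
      by_cases h : d = i <;> simp [sbst, h, Pi.single, Function.update]

lemma sbst_natDegree (c : Fin 3 → ℝ) (i : Fin 3) (p : MvPolynomial (Fin 3) ℝ) :
    (sbst c i p).natDegree ≤ MvPolynomial.degreeOf i p := by
  conv_lhs => rw [p.as_sum, map_sum]
  apply le_trans (Polynomial.natDegree_sum_le _ _)
  refine (Finset.fold_max_le _).mpr ⟨Nat.zero_le _, fun m hm => ?_⟩
  have h1 : sbst c i (MvPolynomial.monomial m (MvPolynomial.coeff m p))
      = Polynomial.C (MvPolynomial.coeff m p)
        * ∏ d, (if d = i then Polynomial.X ^ m d else Polynomial.C (c d) ^ m d) := by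
    simp only [sbst, MvPolynomial.aeval_monomial, algebraMap_eq]
    congr 1
    rw [Finsupp.prod_fintype _ _ fun d => by simp]
    exact Finset.prod_congr rfl fun d _ => by by_cases h : d = i <;> simp [h]
  rw [Function.comp_apply, h1]
  apply le_trans (Polynomial.natDegree_mul_le)
  simp only [Polynomial.natDegree_C, zero_add]
  apply le_trans (Polynomial.natDegree_prod_le _ _)
  have h2 : ∀ d : Fin 3, (if d = i then Polynomial.X ^ m d else Polynomial.C (c d) ^ m d).natDegree
      ≤ if d = i then m i else 0 := by
    intro d
    by_cases h : d = i <;> simp [h, Polynomial.natDegree_X_pow, Polynomial.natDegree_pow]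
  apply le_trans (Finset.sum_le_sum fun d _ => h2 d)
  rw [Finset.sum_ite_eq' Finset.univ i (fun _ => m i)]
  simp only [Finset.mem_univ, if_true]
  exact MvPolynomial.monomial_le_degreeOf i hm

lemma key_lemma (N : ℕ) (hN : 1 ≤ N) (x : Fin (N + 1) → ℝ) (w : Fin (N + 1) → ℝ)
    (hexact : ∀ p : Polynomial ℝ, p.natDegree ≤ 2 * N - 1 →
      ∑ j, w j * p.eval (x j) = ∫ t in (-1 : ℝ)..1, p.eval t)
    (c : Fin 3 → ℝ) (i : Fin 3) (q : MvPolynomial (Fin 3) ℝ)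
    (hq : MvPolynomial.degreeOf i q ≤ 2 * N) :
    ∑ j, w j * MvPolynomial.eval (Function.update c i (x j)) (MvPolynomial.pderiv i q)
      = MvPolynomial.eval (Function.update c i 1) q
        - MvPolynomial.eval (Function.update c i (-1)) q := by
  have hd : (sbst c i q).derivative.natDegree ≤ 2 * N - 1 :=
    le_trans (Polynomial.natDegree_derivative_le _)
      (by have := le_trans (sbst_natDegree c i q) hq; omega)
  have h1 : ∑ j, w j * (sbst c i q).derivative.eval (x j)
      = ∫ t in (-1 : ℝ)..1, (sbst c i q).derivative.eval t := hexact _ hd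
  have h2 : ∫ t in (-1 : ℝ)..1, (sbst c i q).derivative.eval t
      = (sbst c i q).eval 1 - (sbst c i q).eval (-1) := by
    exact intervalIntegral.integral_eq_sub_of_hasDerivAt
      (f := fun s => Polynomial.eval s (sbst c i q))
      (fun t _ => Polynomial.hasDerivAt _ t)
      ((Polynomial.continuous _).intervalIntegrable _ _)
  calc ∑ j, w j * MvPolynomial.eval (Function.update c i (x j)) (MvPolynomial.pderiv i q)
      = ∑ j, w j * (sbst c i q).derivative.eval (x j) := by
        refine Finset.sum_congr rfl fun j _ => ?_
        rw [sbst_deriv, sbst_eval]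
    _ = (sbst c i q).eval 1 - (sbst c i q).eval (-1) := h1.trans h2
    _ = _ := by rw [sbst_eval, sbst_eval]

/-- **Three-dimensional summation-by-parts on the tensor-product grid.** For a
1D quadrature rule on `[−1,1]` exact for polynomials of degree at most `2N−1`,
and trivariate polynomials `F¹, F², F³, φ` of degree at most `N` in each
variable separately, the discrete divergence sum on the tensor-product grid
equals the boundary-face quadrature terms minus the discrete sum with the
derivatives moved onto `φ`. -/
theorem three_dimensional_summation_by_parts
    (N : ℕ) (hN : 1 ≤ N)
    (x : Fin (N + 1) → ℝ) (hx : ∀ j, x j ∈ Set.Icc (-1 : ℝ) 1)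
    (w : Fin (N + 1) → ℝ)
    (hexact : ∀ p : Polynomial ℝ, p.natDegree ≤ 2 * N - 1 →
      ∑ j, w j * p.eval (x j) = ∫ t in (-1 : ℝ)..1, p.eval t)
    (F : Fin 3 → MvPolynomial (Fin 3) ℝ)
    (hF : ∀ i d, MvPolynomial.degreeOf d (F i) ≤ N)
    (φ : MvPolynomial (Fin 3) ℝ)
    (hφ : ∀ d, MvPolynomial.degreeOf d φ ≤ N) :
    ∑ j, ∑ k, ∑ l, w j * w k * w l *
        MvPolynomial.eval ![x j, x k, x l] ((∑ i : Fin 3, MvPolynomial.pderiv i (F i)) * φ)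
      = (∑ k, ∑ l, w k * w l *
            (MvPolynomial.eval ![1, x k, x l] (F 0 * φ)
              - MvPolynomial.eval ![-1, x k, x l] (F 0 * φ)))
        + (∑ j, ∑ l, w j * w l *
            (MvPolynomial.eval ![x j, 1, x l] (F 1 * φ)
              - MvPolynomial.eval ![x j, -1, x l] (F 1 * φ)))
        + (∑ j, ∑ k, w j * w k *
            (MvPolynomial.eval ![x j, x k, 1] (F 2 * φ)
              - MvPolynomial.eval ![x j, x k, -1] (F 2 * φ)))
        - ∑ j, ∑ k, ∑ l, w j * w k * w l *
            MvPolynomial.eval ![x j, x k, x l] (∑ i : Fin 3, F i * MvPolynomial.pderiv i φ) := by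
  have hdeg : ∀ i : Fin 3, MvPolynomial.degreeOf i (F i * φ) ≤ 2 * N := fun i =>
    le_trans (MvPolynomial.degreeOf_mul_le _ _ _)
      (by have := hF i i; have := hφ i; omega)
  have upd0 : ∀ (a b c t : ℝ), Function.update ![a, b, c] (0 : Fin 3) t = ![t, b, c] := by
    intro a b c t; funext d; fin_cases d <;> simp
  have upd1 : ∀ (a b c t : ℝ), Function.update ![a, b, c] (1 : Fin 3) t = ![a, t, c] := by
    intro a b c t; funext d; fin_cases d <;> simp
  have upd2 : ∀ (a b c t : ℝ), Function.update ![a, b, c] (2 : Fin 3) t = ![a, b, t] := by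
    intro a b c t; funext d; fin_cases d <;> simp
  have A0 : ∀ k l, ∑ j, w j * MvPolynomial.eval ![x j, x k, x l]
        (MvPolynomial.pderiv 0 (F 0 * φ))
      = MvPolynomial.eval ![1, x k, x l] (F 0 * φ)
        - MvPolynomial.eval ![-1, x k, x l] (F 0 * φ) := by
    intro k l
    have := key_lemma N hN x w hexact ![0, x k, x l] 0 (F 0 * φ) (hdeg 0)
    simpa [upd0] using this
  have A1 : ∀ j l, ∑ k, w k * MvPolynomial.eval ![x j, x k, x l]
        (MvPolynomial.pderiv 1 (F 1 * φ))
      = MvPolynomial.eval ![x j, 1, x l] (F 1 * φ)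
        - MvPolynomial.eval ![x j, -1, x l] (F 1 * φ) := by
    intro j l
    have := key_lemma N hN x w hexact ![x j, 0, x l] 1 (F 1 * φ) (hdeg 1)
    simpa [upd1] using this
  have A2 : ∀ j k, ∑ l, w l * MvPolynomial.eval ![x j, x k, x l]
        (MvPolynomial.pderiv 2 (F 2 * φ))
      = MvPolynomial.eval ![x j, x k, 1] (F 2 * φ)
        - MvPolynomial.eval ![x j, x k, -1] (F 2 * φ) := by
    intro j k
    have := key_lemma N hN x w hexact ![x j, x k, 0] 2 (F 2 * φ) (hdeg 2)
    simpa [upd2] using this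
  rw [eq_sub_iff_add_eq]
  have hpoint : ∀ v : Fin 3 → ℝ,
      MvPolynomial.eval v ((∑ i : Fin 3, MvPolynomial.pderiv i (F i)) * φ)
        + MvPolynomial.eval v (∑ i : Fin 3, F i * MvPolynomial.pderiv i φ)
      = MvPolynomial.eval v (MvPolynomial.pderiv 0 (F 0 * φ))
        + MvPolynomial.eval v (MvPolynomial.pderiv 1 (F 1 * φ))
        + MvPolynomial.eval v (MvPolynomial.pderiv 2 (F 2 * φ)) := by
    intro v
    have : (∑ i : Fin 3, MvPolynomial.pderiv i (F i)) * φ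
        + ∑ i : Fin 3, F i * MvPolynomial.pderiv i φ
        = MvPolynomial.pderiv 0 (F 0 * φ) + MvPolynomial.pderiv 1 (F 1 * φ)
          + MvPolynomial.pderiv 2 (F 2 * φ) := by
      simp only [Fin.sum_univ_three, MvPolynomial.pderiv_mul]
      ring
    rw [← map_add, this, map_add, map_add]
  calc ∑ j, ∑ k, ∑ l, w j * w k * w l *
        MvPolynomial.eval ![x j, x k, x l] ((∑ i : Fin 3, MvPolynomial.pderiv i (F i)) * φ)
      + ∑ j, ∑ k, ∑ l, w j * w k * w l *
        MvPolynomial.eval ![x j, x k, x l] (∑ i : Fin 3, F i * MvPolynomial.pderiv i φ)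
      = (∑ j, ∑ k, ∑ l, w j * w k * w l *
          MvPolynomial.eval ![x j, x k, x l] (MvPolynomial.pderiv 0 (F 0 * φ)))
        + (∑ j, ∑ k, ∑ l, w j * w k * w l *
          MvPolynomial.eval ![x j, x k, x l] (MvPolynomial.pderiv 1 (F 1 * φ)))
        + (∑ j, ∑ k, ∑ l, w j * w k * w l *
          MvPolynomial.eval ![x j, x k, x l] (MvPolynomial.pderiv 2 (F 2 * φ))) := by
        simp only [← Finset.sum_add_distrib]
        refine Finset.sum_congr rfl fun j _ => Finset.sum_congr rfl fun k _ =>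
          Finset.sum_congr rfl fun l _ => ?_
        rw [← mul_add, hpoint]
        ring
    _ = _ := by
        congr 1
        · congr 1
          · -- direction 0
            rw [Finset.sum_comm]
            refine Finset.sum_congr rfl fun k _ => ?_
            rw [Finset.sum_comm]
            refine Finset.sum_congr rfl fun l _ => ?_
            rw [← A0 k l, Finset.mul_sum]
            exact Finset.sum_congr rfl fun j _ => by ring
          · -- direction 1
            refine Finset.sum_congr rfl fun j _ => ?_
            rw [Finset.sum_comm]
            refine Finset.sum_congr rfl fun l _ => ?_
            rw [← A1 j l, Finset.mul_sum]
            exact Finset.sum_congr rfl fun k _ => by ring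
        · -- direction 2
          refine Finset.sum_congr rfl fun j _ => ?_
          refine Finset.sum_congr rfl fun k _ => ?_
          rw [← A2 j k, Finset.mul_sum]
          exact Finset.sum_congr rfl fun l _ => by ring
end

section
/- Let A⁺, A⁻ ∈ Mₘ(ℝ) be symmetric matrices, and set A = A⁺ + A⁻, |A| = A⁺ − A⁻, and |A⁻| = −A⁻. Let Q, Q_∞ ∈ ℝᵐ and define the upwind boundary flux F* = ½ A (Q + Q_∞) − ½ |A| (Q_∞ − Q). Then the completed-square boundary identity holds: (F* − ½ A Q)ᵀ Q = ½ Qᵀ A⁺ Q + ½ (Q − Q_∞)ᵀ |A⁻| (Q − Q_∞) − ½ (Q_∞)ᵀ |A⁻| Q_∞. -/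
open Matrix

/-- **Completed-square boundary identity for the upwind flux.** For symmetric
`A⁺, A⁻ ∈ Mₘ(ℝ)`, with `A = A⁺ + A⁻`, `|A| = A⁺ − A⁻`, `|A⁻| = −A⁻`, interior
state `Q`, exterior state `Q_∞`, and upwind boundary flux
`F* = ½A(Q+Q_∞) − ½|A|(Q_∞−Q)`, one has
`(F* − ½AQ)ᵀQ = ½QᵀA⁺Q + ½(Q−Q_∞)ᵀ|A⁻|(Q−Q_∞) − ½(Q_∞)ᵀ|A⁻|Q_∞`. -/
theorem completed_square_boundary_identity
    (m : ℕ) (Ap An : Matrix (Fin m) (Fin m) ℝ)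
    (hAp : Ap.IsSymm) (hAn : An.IsSymm)
    (A absA absAn : Matrix (Fin m) (Fin m) ℝ)
    (hA : A = Ap + An) (habsA : absA = Ap - An) (habsAn : absAn = -An)
    (Q Qinf : Fin m → ℝ)
    (Fstar : Fin m → ℝ)
    (hFstar : Fstar = (1 / 2 : ℝ) • (A *ᵥ (Q + Qinf)) - (1 / 2 : ℝ) • (absA *ᵥ (Qinf - Q))) :
    (Fstar - (1 / 2 : ℝ) • (A *ᵥ Q)) ⬝ᵥ Q
      = (1 / 2) * (Q ⬝ᵥ (Ap *ᵥ Q))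
        + (1 / 2) * ((Q - Qinf) ⬝ᵥ (absAn *ᵥ (Q - Qinf)))
        - (1 / 2) * (Qinf ⬝ᵥ (absAn *ᵥ Qinf)) := by
  have hswap : Q ⬝ᵥ (An *ᵥ Qinf) = Qinf ⬝ᵥ (An *ᵥ Q) := by
    rw [dotProduct_mulVec, dotProduct_mulVec]
    nth_rewrite 1 [← hAn.eq]
    rw [vecMul_transpose, dotProduct_comm, dotProduct_mulVec]
  subst hFstar hA habsA habsAn
  simp only [sub_dotProduct, add_dotProduct, smul_dotProduct, Matrix.add_mulVec,
    Matrix.sub_mulVec, Matrix.neg_mulVec, mulVec_add, mulVec_sub,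
    dotProduct_add, dotProduct_sub, dotProduct_neg, neg_dotProduct,
    smul_eq_mul]
  ring_nf
  linarith [hswap, dotProduct_comm (An *ᵥ Q) Q, dotProduct_comm (Ap *ᵥ Q) Q, dotProduct_comm (An *ᵥ Qinf) Q]
end

section
/- Let A⁺, A⁻ ∈ Mₘ(ℝ) be symmetric with A⁺ positive semidefinite and −A⁻ positive semidefinite, and set A = A⁺ + A⁻ and |A| = A⁺ − A⁻. Let Q, Q_∞ ∈ ℝᵐ and F* = ½ A (Q + Q_∞) − ½ |A| (Q_∞ − Q). Then the boundary quadrature contribution is bounded below: (F* − ½ A Q)ᵀ Q ≥ − ½ (Q_∞)ᵀ (−A⁻) Q_∞. In particular, if Q_∞ = 0 then (F* − ½ A Q)ᵀ Q ≥ 0. -/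
open Matrix

lemma symm_dot_swap {m : ℕ} (M : Matrix (Fin m) (Fin m) ℝ) (hM : M.IsSymm)
    (x y : Fin m → ℝ) : x ⬝ᵥ (M *ᵥ y) = y ⬝ᵥ (M *ᵥ x) := by
  rw [Matrix.dotProduct_mulVec, ← Matrix.mulVec_transpose, hM.eq, dotProduct_comm]

/-- **Lower bound for the boundary quadrature contribution.** For symmetric
`A⁺, A⁻ ∈ Mₘ(ℝ)` with `A⁺` positive semidefinite and `−A⁻` positive
semidefinite, `A = A⁺ + A⁻`, `|A| = A⁺ − A⁻`, interior state `Q`, exterior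
state `Q_∞`, and upwind boundary flux `F* = ½A(Q+Q_∞) − ½|A|(Q_∞−Q)`, one has
`(F* − ½AQ)ᵀQ ≥ −½(Q_∞)ᵀ(−A⁻)Q_∞`; in particular `(F* − ½AQ)ᵀQ ≥ 0` when
`Q_∞ = 0`. -/
theorem boundary_contribution_lower_bound
    (m : ℕ) (Ap An : Matrix (Fin m) (Fin m) ℝ)
    (hAp : Ap.IsSymm) (hAn : An.IsSymm)
    (hApPSD : Ap.PosSemidef) (hAnPSD : (-An).PosSemidef)
    (A absA : Matrix (Fin m) (Fin m) ℝ)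
    (hA : A = Ap + An) (habsA : absA = Ap - An)
    (Q Qinf : Fin m → ℝ)
    (Fstar : Fin m → ℝ)
    (hFstar : Fstar = (1 / 2 : ℝ) • (A *ᵥ (Q + Qinf)) - (1 / 2 : ℝ) • (absA *ᵥ (Qinf - Q))) :
    (-(1 / 2) * (Qinf ⬝ᵥ ((-An) *ᵥ Qinf)) ≤ (Fstar - (1 / 2 : ℝ) • (A *ᵥ Q)) ⬝ᵥ Q)
    ∧ (Qinf = 0 → 0 ≤ (Fstar - (1 / 2 : ℝ) • (A *ᵥ Q)) ⬝ᵥ Q) := by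
  subst hA habsA hFstar
  have h1 : 0 ≤ Q ⬝ᵥ (Ap *ᵥ Q) := by simpa using hApPSD.dotProduct_mulVec_nonneg Q
  have h2 : 0 ≤ (Q - Qinf) ⬝ᵥ ((-An) *ᵥ (Q - Qinf)) := by simpa using hAnPSD.dotProduct_mulVec_nonneg (Q - Qinf)
  have hsw : Q ⬝ᵥ (An *ᵥ Qinf) = Qinf ⬝ᵥ (An *ᵥ Q) := symm_dot_swap An hAn Q Qinf
  have key : -(1 / 2) * (Qinf ⬝ᵥ ((-An) *ᵥ Qinf)) ≤
      (((1 / 2 : ℝ) • ((Ap + An) *ᵥ (Q + Qinf)) - (1 / 2 : ℝ) • ((Ap - An) *ᵥ (Qinf - Q))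
        - (1 / 2 : ℝ) • ((Ap + An) *ᵥ Q)) ⬝ᵥ Q) := by
    simp only [sub_dotProduct, smul_dotProduct, Matrix.mulVec_add,
      Matrix.mulVec_sub, Matrix.add_mulVec, Matrix.sub_mulVec, Matrix.neg_mulVec,
      dotProduct_add, dotProduct_sub, dotProduct_neg,
      add_dotProduct, dotProduct_comm Q, smul_eq_mul] at *
    nlinarith [h1, h2, hsw]
  refine ⟨key, fun h => ?_⟩
  subst h
  calc (0:ℝ) = -(1 / 2) * ((0 : Fin m → ℝ) ⬝ᵥ ((-An) *ᵥ 0)) := by simp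
    _ ≤ _ := key
end
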